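/- arXiv:1606.04461 — 10 statements merged into one kernel-verified Lean document; each statement's English description precedes it below -/
import Mathlib

section
/- Let r ≥ 2, 2 ≤ h ≤ r, and k ≥ 3 be integers, and let G be an r-regular finite simple graph. If G has an h-factor that is completely k-magic, then G is completely k-magic. -/
open Classical in
/-- The sum of the labels `ℓ s(v,u)` over all neighbors `u` of `v` in `G`. -/
noncomputable def vertexLabelSum {V : Type*} [Fintype V] (G : SimpleGraph V)
    {M : Type*} [AddCommMonoid M] (ℓ : Sym2 V → M) (v : V) : M :=
  ∑ u ∈ Finset.univ.filter (fun u => G.Adj v u), ℓ s(v, u)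

/-- `ℓ` is a `c`-sum `k`-magic labeling of `G`: it is nonzero on every edge of `G`
and the labels around every vertex sum to `c` in `ZMod k`. -/
def IsMagicLabeling {V : Type*} [Fintype V] (G : SimpleGraph V) (k : ℕ) (c : ZMod k)
    (ℓ : Sym2 V → ZMod k) : Prop :=
  (∀ e ∈ G.edgeSet, ℓ e ≠ 0) ∧ ∀ v : V, vertexLabelSum G ℓ v = c

/-- `G` is `c`-sum `k`-magic. -/
def IsSumMagic {V : Type*} [Fintype V] (G : SimpleGraph V) (k : ℕ) (c : ZMod k) : Prop :=
  ∃ ℓ : Sym2 V → ZMod k, IsMagicLabeling G k c ℓ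

/-- `G` is completely `k`-magic: `c`-sum `k`-magic for every `c ∈ ZMod k`. -/
def CompletelyMagic {V : Type*} [Fintype V] (G : SimpleGraph V) (k : ℕ) : Prop :=
  ∀ c : ZMod k, IsSumMagic G k c

/-- The sum spectrum of `G` with respect to `k`. -/
def sumSpectrum {V : Type*} [Fintype V] (G : SimpleGraph V) (k : ℕ) : Set (ZMod k) :=
  {c : ZMod k | IsSumMagic G k c}

open Classical in
/-- Degree of a vertex (classical, to avoid decidability assumptions). -/
noncomputable def degreeOf {V : Type*} [Fintype V] (G : SimpleGraph V) (v : V) : ℕ :=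
  (Finset.univ.filter (fun u => G.Adj v u)).card

/-- `G` is `r`-regular. -/
def IsRegularDeg {V : Type*} [Fintype V] (G : SimpleGraph V) (r : ℕ) : Prop :=
  ∀ v : V, degreeOf G v = r

/-- If an `r`-regular graph has an `h`-factor that is completely `k`-magic,
then the graph itself is completely `k`-magic. -/
theorem completely_magic_of_factor {V : Type*} [Fintype V] (G : SimpleGraph V)
    (r h k : ℕ) (hr : 2 ≤ r) (hh2 : 2 ≤ h) (hhr : h ≤ r) (hk : 3 ≤ k)
    (hreg : IsRegularDeg G r)
    (hfac : ∃ H : SimpleGraph V, H ≤ G ∧ IsRegularDeg H h ∧ CompletelyMagic H k) :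
    CompletelyMagic G k := by
  classical
  obtain ⟨H, hHG, hHreg, hHmag⟩ := hfac
  haveI : Fact (1 < k) := ⟨by omega⟩
  intro c
  obtain ⟨ℓ, hℓne, hℓsum⟩ := hHmag (c - ((r - h : ℕ) : ZMod k))
  refine ⟨fun e => if e ∈ H.edgeSet then ℓ e else 1, ?_, ?_⟩
  · intro e _
    by_cases he : e ∈ H.edgeSet
    · simpa [he] using hℓne e he
    · simpa [he] using (one_ne_zero : (1 : ZMod k) ≠ 0)
  · intro v
    have hsub : (Finset.univ.filter (fun u => H.Adj v u)) ⊆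
        (Finset.univ.filter (fun u => G.Adj v u)) := by
      intro u hu
      simp only [Finset.mem_filter, Finset.mem_univ, true_and] at hu ⊢
      exact hHG hu
    have hsplit : vertexLabelSum G (fun e => if e ∈ H.edgeSet then ℓ e else 1) v =
        (∑ u ∈ Finset.univ.filter (fun u => H.Adj v u),
          (if s(v, u) ∈ H.edgeSet then ℓ s(v, u) else 1)) +
        (∑ u ∈ (Finset.univ.filter (fun u => G.Adj v u)) \
            (Finset.univ.filter (fun u => H.Adj v u)),
          (if s(v, u) ∈ H.edgeSet then ℓ s(v, u) else 1)) := by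
      rw [vertexLabelSum, ← Finset.sum_sdiff hsub, add_comm]
    rw [hsplit]
    have h1 : (∑ u ∈ Finset.univ.filter (fun u => H.Adj v u),
        (if s(v, u) ∈ H.edgeSet then ℓ s(v, u) else 1)) = c - ((r - h : ℕ) : ZMod k) := by
      rw [← hℓsum v, vertexLabelSum]
      apply Finset.sum_congr rfl
      intro u hu
      simp only [Finset.mem_filter, Finset.mem_univ, true_and] at hu
      rw [if_pos (H.mem_edgeSet.mpr hu)]
    have h2 : (∑ u ∈ (Finset.univ.filter (fun u => G.Adj v u)) \
            (Finset.univ.filter (fun u => H.Adj v u)),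
          (if s(v, u) ∈ H.edgeSet then ℓ s(v, u) else 1)) = ((r - h : ℕ) : ZMod k) := by
      have hcard : ((Finset.univ.filter (fun u => G.Adj v u)) \
          (Finset.univ.filter (fun u => H.Adj v u))).card = r - h := by
        rw [Finset.card_sdiff_of_subset hsub]
        have hg := hreg v
        have hhv := hHreg v
        rw [degreeOf] at hg hhv
        rw [hg, hhv]
      calc (∑ u ∈ (Finset.univ.filter (fun u => G.Adj v u)) \
            (Finset.univ.filter (fun u => H.Adj v u)),
          (if s(v, u) ∈ H.edgeSet then ℓ s(v, u) else 1))
          = ∑ u ∈ (Finset.univ.filter (fun u => G.Adj v u)) \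
            (Finset.univ.filter (fun u => H.Adj v u)), (1 : ZMod k) := by
            apply Finset.sum_congr rfl
            intro u hu
            simp only [Finset.mem_sdiff, Finset.mem_filter, Finset.mem_univ, true_and] at hu
            rw [if_neg (fun hmem => hu.2 (H.mem_edgeSet.mp hmem))]
        _ = ((r - h : ℕ) : ZMod k) := by rw [Finset.sum_const, hcard]; simp
    rw [h1, h2, sub_add_cancel]
end

section
/- Let G be an r-regular finite simple graph, where r ≥ 3 is odd, and let k ≥ 5 be an integer. Then G is completely k-magic. -/
lemma rep_lemma : ∀ (r N m : ℕ), N ≤ r * m → ∃ f : Fin r → ℕ, (∀ i, f i ≤ m) ∧ ∑ i, f i = N := by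
  intro r
  induction r with
  | zero => intro N m hN; exact ⟨fun _ => 0, fun i => i.elim0, by simpa using (by omega : 0 = N)⟩
  | succ r ih =>
    intro N m hN
    have hexp : (r + 1) * m = r * m + m := by ring
    obtain ⟨f, hf, hsum⟩ := ih (N - min m N) m (by omega)
    refine ⟨Fin.cons (min m N) f, ?_, ?_⟩
    · intro i
      refine Fin.cases ?_ ?_ i
      · simpa using Nat.min_le_left m N
      · intro j; simpa using hf j
    · rw [Fin.sum_cons, hsum]; omega

lemma exists_half {k : ℕ} [NeZero k] (x : ZMod k) (h : k % 2 = 1 ∨ x.val % 2 = 0) :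
    ∃ s : ZMod k, s + s = x := by
  rcases h with h | h
  · refine ⟨(((k + 1) / 2 : ℕ) : ZMod k) * x, ?_⟩
    have h1 : ((((k+1)/2 : ℕ) : ZMod k) * x) + ((((k+1)/2 : ℕ) : ZMod k) * x)
        = (((k+1)/2 + (k+1)/2 : ℕ) : ZMod k) * x := by push_cast; ring
    have h2 : (k+1)/2 + (k+1)/2 = k + 1 := by omega
    rw [h1, h2]
    push_cast [ZMod.natCast_self]
    ring
  · refine ⟨((x.val / 2 : ℕ) : ZMod k), ?_⟩
    have h1 : (((x.val/2 : ℕ)) : ZMod k) + ((x.val/2 : ℕ) : ZMod k)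
        = ((x.val/2 + x.val/2 : ℕ) : ZMod k) := by push_cast; ring
    have h2 : x.val/2 + x.val/2 = x.val := by omega
    rw [h1, h2, ZMod.natCast_val, ZMod.cast_id]

lemma not_half {k : ℕ} [NeZero k] (x : ZMod k) (h : ¬ ∃ s : ZMod k, s + s = x) :
    k % 2 = 0 ∧ x.val % 2 = 1 := by
  constructor
  · by_contra h0
    exact h (exists_half x (Or.inl (by omega)))
  · by_contra h0
    exact h (exists_half x (Or.inr (by omega)))

lemma zkey_aux (k r m : ℕ) (hm : 2 * m + 3 ≤ k) (s : ZMod k) (hN : s.val ≤ r * m) :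
    ∃ b : Fin r → ZMod k, (∑ i, b i) = s + r ∧ ∀ i j, b i + b j ≠ 0 := by
  haveI : NeZero k := ⟨by omega⟩
  obtain ⟨f, hf, hsum⟩ := rep_lemma r s.val m hN
  refine ⟨fun i => ((1 + f i : ℕ) : ZMod k), ?_, ?_⟩
  · have h1 : (∑ i, ((1 + f i : ℕ) : ZMod k)) = ((∑ i, (1 + f i) : ℕ) : ZMod k) := by
      rw [Nat.cast_sum]
    have h2 : (∑ i, (1 + f i)) = r + s.val := by
      rw [Finset.sum_add_distrib, hsum, Finset.sum_const, Finset.card_univ, Fintype.card_fin,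
        smul_eq_mul, mul_one]
    rw [h1, h2]
    push_cast
    rw [ZMod.natCast_val, ZMod.cast_id]
    ring
  · intro i j h
    have h1 : ((2 + f i + f j : ℕ) : ZMod k) = 0 := by
      push_cast at h ⊢
      linear_combination h
    rw [CharP.cast_eq_zero_iff (ZMod k) k] at h1
    have h2 := Nat.le_of_dvd (by omega) h1
    have h3 := hf i
    have h4 := hf j
    omega

lemma zkey (k r : ℕ) (hk : 5 ≤ k) (hr : 3 ≤ r) (hodd : r % 2 = 1) (t : ZMod k) :
    ∃ b : Fin r → ZMod k, (∑ i, b i) = t ∧ ∀ i j, b i + b j ≠ 0 := by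
  haveI : NeZero k := ⟨by omega⟩
  obtain ⟨m, hm⟩ : ∃ m, m = (k - 3) / 2 := ⟨_, rfl⟩
  have hm2 : 2 * m + 3 ≤ k := by omega
  have hmin : (t - (r : ZMod k)).val ≤ r * m ∨ (-t - (r : ZMod k)).val ≤ r * m := by
    by_cases hbig : k - 1 ≤ r * m
    · left
      have := ZMod.val_lt (t - (r : ZMod k))
      omega
    · have h3 : 3 * m ≤ r * m := Nat.mul_le_mul_right m hr
      have hk8 : k = 5 ∨ k = 6 ∨ k = 8 := by omega
      rcases hk8 with h5 | h6 | h8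
      · subst h5
        have hm1 : m = 1 := by omega
        subst hm1
        have hr3 : r = 3 := by omega
        subst hr3
        by_contra hcon
        push_neg at hcon
        obtain ⟨h1, h2⟩ := hcon
        have hA := ZMod.val_lt (t - ((3:ℕ) : ZMod 5))
        have hB := ZMod.val_lt (-t - ((3:ℕ) : ZMod 5))
        have hz : (((t - ((3:ℕ):ZMod 5)).val + (-t - ((3:ℕ):ZMod 5)).val + 6 : ℕ) : ZMod 5) = 0 := by
          push_cast [ZMod.natCast_val, ZMod.cast_id]
          ring
        rw [CharP.cast_eq_zero_iff (ZMod 5) 5] at hz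
        obtain ⟨cq, hcq⟩ := hz
        omega
      · subst h6
        have hm1 : m = 1 := by omega
        subst hm1
        have hr3 : r = 3 := by omega
        subst hr3
        by_contra hcon
        push_neg at hcon
        obtain ⟨h1, h2⟩ := hcon
        have hA := ZMod.val_lt (t - ((3:ℕ) : ZMod 6))
        have hB := ZMod.val_lt (-t - ((3:ℕ) : ZMod 6))
        have hz : (((t - ((3:ℕ):ZMod 6)).val + (-t - ((3:ℕ):ZMod 6)).val + 6 : ℕ) : ZMod 6) = 0 := by
          push_cast [ZMod.natCast_val, ZMod.cast_id]
          ring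
        rw [CharP.cast_eq_zero_iff (ZMod 6) 6] at hz
        obtain ⟨cq, hcq⟩ := hz
        omega
      · subst h8
        have hm1 : m = 2 := by omega
        subst hm1
        have hr3 : r = 3 := by omega
        subst hr3
        by_contra hcon
        push_neg at hcon
        obtain ⟨h1, h2⟩ := hcon
        have hA := ZMod.val_lt (t - ((3:ℕ) : ZMod 8))
        have hB := ZMod.val_lt (-t - ((3:ℕ) : ZMod 8))
        have hz : (((t - ((3:ℕ):ZMod 8)).val + (-t - ((3:ℕ):ZMod 8)).val + 6 : ℕ) : ZMod 8) = 0 := by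
          push_cast [ZMod.natCast_val, ZMod.cast_id]
          ring
        rw [CharP.cast_eq_zero_iff (ZMod 8) 8] at hz
        obtain ⟨cq, hcq⟩ := hz
        omega
  rcases hmin with h | h
  · obtain ⟨b, hb1, hb2⟩ := zkey_aux k r m hm2 _ h
    exact ⟨b, by rw [hb1]; ring, hb2⟩
  · obtain ⟨b, hb1, hb2⟩ := zkey_aux k r m hm2 _ h
    refine ⟨fun i => -(b i), ?_, ?_⟩
    · rw [Finset.sum_neg_distrib, hb1]; ring
    · intro i j hij
      exact hb2 i j (by linear_combination -hij)

lemma key (k r : ℕ) (hk : 5 ≤ k) (hr : 3 ≤ r) (hodd : r % 2 = 1) (u t : ZMod k) :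
    ∃ a : Fin r → ZMod k, (∑ i, a i) = t ∧ ∀ i j, a i + a j ≠ u := by
  haveI : NeZero k := ⟨by omega⟩
  by_cases hu : ∃ h : ZMod k, h + h = u
  · obtain ⟨h, hh⟩ := hu
    obtain ⟨b, hb1, hb2⟩ := zkey k r hk hr hodd (t - (r : ZMod k) * h)
    refine ⟨fun i => b i + h, ?_, ?_⟩
    · rw [Finset.sum_add_distrib, hb1, Finset.sum_const, Finset.card_univ, Fintype.card_fin,
        nsmul_eq_mul]
      ring
    · intro i j hij
      exact hb2 i j (by linear_combination hij - hh)
  · obtain ⟨hkev, huodd⟩ := not_half u hu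
    obtain ⟨v, hv⟩ : ∃ v : ℕ, 2 * v = u.val + 1 := ⟨(u.val + 1) / 2, by omega⟩
    obtain ⟨m, hmd⟩ : ∃ m : ℕ, 2 * m + 2 = k := ⟨(k - 2) / 2, by omega⟩
    have hval : u.val < k := ZMod.val_lt u
    have h3m : 3 * m ≤ r * m := Nat.mul_le_mul_right m hr
    have hNle : (t - ((r * v : ℕ) : ZMod k)).val ≤ r * m := by
      have h1 := ZMod.val_lt (t - ((r * v : ℕ) : ZMod k))
      omega
    obtain ⟨f, hf, hsum⟩ := rep_lemma r (t - ((r * v : ℕ) : ZMod k)).val m hNle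
    refine ⟨fun i => ((v + f i : ℕ) : ZMod k), ?_, ?_⟩
    · have h1 : (∑ i, ((v + f i : ℕ) : ZMod k)) = ((∑ i, (v + f i) : ℕ) : ZMod k) := by
        rw [Nat.cast_sum]
      have h2 : (∑ i, (v + f i)) = r * v + (t - ((r * v : ℕ) : ZMod k)).val := by
        rw [Finset.sum_add_distrib, hsum, Finset.sum_const, Finset.card_univ, Fintype.card_fin,
          smul_eq_mul]
      rw [h1, h2]
      push_cast
      rw [ZMod.natCast_val, ZMod.cast_id]
      ring
    · intro i j hij
      have he : (v + f i) + (v + f j) = u.val + (1 + f i + f j) := by omega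
      have h1 : ((u.val + (1 + f i + f j) : ℕ) : ZMod k) = u := by
        rw [← he]
        push_cast at hij ⊢
        linear_combination hij
      have hu' : ((u.val : ℕ) : ZMod k) = u := by rw [ZMod.natCast_val, ZMod.cast_id]
      have h2 : ((1 + f i + f j : ℕ) : ZMod k) = 0 := by
        push_cast at h1 hu' ⊢
        linear_combination h1 - hu'
      rw [CharP.cast_eq_zero_iff (ZMod k) k] at h2
      have h4 := Nat.le_of_dvd (by omega) h2
      have h5 := hf i
      have h6 := hf j
      omega

lemma dec_lemma {V : Type*} [Fintype V] [DecidableEq V] :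
    ∀ (c : ℕ) (M : V → V → ℕ), (∀ v, ∑ w, M v w = c) → (∀ w, ∑ v, M v w = c) →
      ∃ σ : Fin c → Equiv.Perm V, ∀ v w, M v w = ∑ i, (if σ i v = w then 1 else 0) := by
  intro c
  induction c with
  | zero =>
    intro M hrow _
    refine ⟨Fin.elim0, fun v w => ?_⟩
    have h0 : M v w = 0 := by
      have := hrow v
      exact (Finset.sum_eq_zero_iff.mp this) w (Finset.mem_univ w)
    simp [h0]
  | succ c ih =>
    intro M hrow hcol
    set t : V → Finset V := fun v => Finset.univ.filter (fun w => 0 < M v w) with ht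
    have hall : ∀ S : Finset V, S.card ≤ (S.biUnion t).card := by
      intro S
      have h1 : (c + 1) * S.card ≤ (c + 1) * (S.biUnion t).card := by
        calc (c + 1) * S.card = ∑ v ∈ S, (c + 1) := by rw [Finset.sum_const, smul_eq_mul, mul_comm]
        _ = ∑ v ∈ S, ∑ w, M v w := by exact Finset.sum_congr rfl fun v _ => (hrow v).symm
        _ = ∑ v ∈ S, ∑ w ∈ t v, M v w := by
            refine Finset.sum_congr rfl fun v _ => ?_
            rw [ht]
            exact (Finset.sum_filter_of_ne (fun w _ hw => Nat.pos_of_ne_zero hw)).symm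
        _ ≤ ∑ v ∈ S, ∑ w ∈ S.biUnion t, M v w := by
            refine Finset.sum_le_sum fun v hv => ?_
            exact Finset.sum_le_sum_of_subset (Finset.subset_biUnion_of_mem t hv)
        _ = ∑ w ∈ S.biUnion t, ∑ v ∈ S, M v w := Finset.sum_comm
        _ ≤ ∑ w ∈ S.biUnion t, ∑ v, M v w := by
            refine Finset.sum_le_sum fun w _ => ?_
            exact Finset.sum_le_sum_of_subset (Finset.subset_univ S)
        _ = ∑ w ∈ S.biUnion t, (c + 1) := Finset.sum_congr rfl fun w _ => hcol w
        _ = (c + 1) * (S.biUnion t).card := by rw [Finset.sum_const, smul_eq_mul, mul_comm]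
      exact Nat.le_of_mul_le_mul_left h1 (Nat.succ_pos c)
    obtain ⟨f, hfinj, hft⟩ := (Finset.all_card_le_biUnion_card_iff_exists_injective t).mp hall
    have hpos : ∀ v, 0 < M v (f v) := by
      intro v
      have := hft v
      rw [ht] at this
      exact (Finset.mem_filter.mp this).2
    let σ0 : Equiv.Perm V := Equiv.ofBijective f ((Finite.injective_iff_bijective).mp hfinj)
    have hσ0 : ∀ v, σ0 v = f v := fun v => rfl
    have hle : ∀ v w, (if σ0 v = w then 1 else 0) ≤ M v w := by
      intro v w
      split_ifs with h
      · rw [← h, hσ0]; exact hpos v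
      · exact Nat.zero_le _
    set M' : V → V → ℕ := fun v w => M v w - (if σ0 v = w then 1 else 0) with hM'
    have hsum_ind_row : ∀ v, (∑ w, (if σ0 v = w then 1 else 0)) = 1 := by
      intro v
      rw [Finset.sum_ite_eq]
      simp
    have hsum_ind_col : ∀ w, (∑ v, (if σ0 v = w then 1 else 0)) = 1 := by
      intro w
      have : ∀ v, (if σ0 v = w then (1:ℕ) else 0) = (if v = σ0.symm w then 1 else 0) := by
        intro v
        congr 1
        simp [Equiv.eq_symm_apply, eq_comm]
      rw [Finset.sum_congr rfl fun v _ => this v, Finset.sum_ite_eq']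
      simp
    have hrow' : ∀ v, ∑ w, M' v w = c := by
      intro v
      have hs : (∑ w, M' v w) + (∑ w, (if σ0 v = w then 1 else 0)) = ∑ w, M v w := by
        rw [← Finset.sum_add_distrib]
        exact Finset.sum_congr rfl fun w _ => Nat.sub_add_cancel (hle v w)
      have := hrow v
      have := hsum_ind_row v
      omega
    have hcol' : ∀ w, ∑ v, M' v w = c := by
      intro w
      have hs : (∑ v, M' v w) + (∑ v, (if σ0 v = w then 1 else 0)) = ∑ v, M v w := by
        rw [← Finset.sum_add_distrib]
        exact Finset.sum_congr rfl fun v _ => Nat.sub_add_cancel (hle v w)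
      have := hcol w
      have := hsum_ind_col w
      omega
    obtain ⟨σ', hσ'⟩ := ih M' hrow' hcol'
    refine ⟨Fin.cons σ0 σ', fun v w => ?_⟩
    rw [Fin.sum_univ_succ]
    simp only [Fin.cons_zero, Fin.cons_succ]
    rw [← hσ' v w]
    have h1 := hle v w
    have h2 : M' v w = M v w - (if σ0 v = w then 1 else 0) := rfl
    omega

lemma cast_parity1 {n : ℕ} (h : n % 2 = 1) : ((n : ℕ) : ZMod 2) = 1 := by
  rw [← ZMod.natCast_mod n 2, h]; rfl


/-- An `r`-regular graph with `r ≥ 3` odd is completely `k`-magic for every `k ≥ 5`. -/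
theorem odd_regular_completely_magic {V : Type*} [Fintype V] (G : SimpleGraph V)
    (r k : ℕ) (hr : 3 ≤ r) (hodd : Odd r) (hk : 5 ≤ k)
    (hreg : IsRegularDeg G r) :
    CompletelyMagic G k := by
  classical
  haveI : NeZero k := ⟨by omega⟩
  have hodd' : r % 2 = 1 := Nat.odd_iff.mp hodd
  intro c
  have hdeg : ∀ v : V, (Finset.univ.filter (fun u => G.Adj v u)).card = r := by
    intro v
    have h := hreg v
    unfold degreeOf at h
    convert h using 2
  have hrow : ∀ v, ∑ w, (if G.Adj v w then (1:ℕ) else 0) = r := by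
    intro v
    rw [← Finset.card_filter]
    exact hdeg v
  have hcol : ∀ w, ∑ v, (if G.Adj v w then (1:ℕ) else 0) = r := by
    intro w
    have he : ∀ v, (if G.Adj v w then (1:ℕ) else 0) = (if G.Adj w v then 1 else 0) := by
      intro v
      exact if_congr (G.adj_comm v w) rfl rfl
    rw [Finset.sum_congr rfl fun v _ => he v, ← Finset.card_filter]
    exact hdeg w
  obtain ⟨σ, hσ⟩ := dec_lemma r (fun v w => if G.Adj v w then 1 else 0) hrow hcol
  have hadj : ∀ (i : Fin r) (v : V), G.Adj v (σ i v) := by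
    intro i v
    by_contra hna
    have h1 := hσ v (σ i v)
    rw [if_neg hna] at h1
    have h2 : (1:ℕ) ≤ ∑ i' : Fin r, (if σ i' v = σ i v then 1 else 0) := by
      have h3 := Finset.single_le_sum (f := fun i' : Fin r => if σ i' v = σ i v then (1:ℕ) else 0)
        (fun i' _ => Nat.zero_le _) (Finset.mem_univ i)
      simpa using h3
    omega
  have hadj' : ∀ (i : Fin r) (v : V), G.Adj v ((σ i)⁻¹ v) := by
    intro i v
    have h1 := hadj i ((σ i)⁻¹ v)
    rw [(Equiv.Perm.eq_inv_iff_eq.mp rfl : (σ i) ((σ i)⁻¹ v) = v)] at h1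
    exact h1.symm
  have hone : ∀ {x y : V}, G.Adj x y → ∃ i0 : Fin r,
      (Finset.univ.filter (fun i => σ i x = y)) = {i0} := by
    intro x y hxy
    have h1 := hσ x y
    rw [if_pos hxy] at h1
    have h2 : (Finset.univ.filter (fun i => σ i x = y)).card = 1 := by
      rw [Finset.card_filter]; exact h1.symm
    exact Finset.card_eq_one.mp h2
  obtain ⟨g, s, hgs⟩ : ∃ g s : ZMod k, (r : ZMod k) * g + (s + s) = c := by
    by_cases hc : ∃ s : ZMod k, s + s = c
    · obtain ⟨s, hs⟩ := hc
      exact ⟨0, s, by rw [mul_zero, zero_add, hs]⟩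
    · obtain ⟨hkev, hcodd⟩ := not_half c hc
      have hd : (c - (r : ZMod k)).val % 2 = 0 := by
        by_contra hdo
        have hdo1 : (c - (r:ZMod k)).val % 2 = 1 := by omega
        have h2 : (2:ℕ) ∣ k := by omega
        have hπ : ∀ x : ZMod k, (ZMod.castHom h2 (ZMod 2)) x = ((x.val : ℕ) : ZMod 2) := fun x => by
          rw [ZMod.castHom_apply, ← ZMod.natCast_val]
        have hc1 : ((c.val : ℕ) : ZMod 2) = 1 := cast_parity1 hcodd
        have hd1 : (((c - (r:ZMod k)).val : ℕ) : ZMod 2) = 1 := cast_parity1 hdo1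
        have hr1 : (((r : ZMod k).val : ℕ) : ZMod 2) = 1 := by
          apply cast_parity1
          rw [ZMod.val_natCast]
          rw [Nat.mod_mod_of_dvd r h2]
          exact hodd'
        have hhom : (ZMod.castHom h2 (ZMod 2)) (c - (r:ZMod k))
            = (ZMod.castHom h2 (ZMod 2)) c - (ZMod.castHom h2 (ZMod 2)) (r:ZMod k) :=
          map_sub _ _ _
        rw [hπ, hπ, hπ, hd1, hc1, hr1, sub_self] at hhom
        exact one_ne_zero hhom
      obtain ⟨s, hs⟩ := exists_half (c - (r : ZMod k)) (Or.inr hd)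
      exact ⟨1, s, by rw [mul_one, hs]; ring⟩
  obtain ⟨a, ha1, ha2⟩ := key k r hk hr hodd' (-g) s
  set S1 : V → V → ZMod k := fun x y => ∑ i, if σ i x = y then a i else 0 with hS1d
  have hFsymm : ∀ x y : V, g + (S1 x y + S1 y x) = g + (S1 y x + S1 x y) := by
    intro x y; ring
  refine ⟨Sym2.lift ⟨fun x y => g + (S1 x y + S1 y x), hFsymm⟩, ?_, ?_⟩
  · intro e he
    revert he
    induction e using Sym2.ind with
    | _ x y =>
      intro he
      have hxy : G.Adj x y := (SimpleGraph.mem_edgeSet G).mp he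
      obtain ⟨i0, hi0⟩ := hone hxy
      obtain ⟨i1, hi1⟩ := hone hxy.symm
      have hS1xy : S1 x y = a i0 := by
        rw [hS1d]
        dsimp only
        rw [← Finset.sum_filter, hi0, Finset.sum_singleton]
      have hS1yx : S1 y x = a i1 := by
        rw [hS1d]
        dsimp only
        rw [← Finset.sum_filter, hi1, Finset.sum_singleton]
      rw [Sym2.lift_mk]
      dsimp only
      rw [hS1xy, hS1yx]
      intro h0
      exact ha2 i0 i1 (by linear_combination h0)
  · intro v
    have hmem : ∀ i : Fin r, σ i v ∈ Finset.univ.filter (fun u => G.Adj v u) := fun i =>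
      Finset.mem_filter.mpr ⟨Finset.mem_univ _, hadj i v⟩
    have hmem' : ∀ i : Fin r, (σ i)⁻¹ v ∈ Finset.univ.filter (fun u => G.Adj v u) := fun i =>
      Finset.mem_filter.mpr ⟨Finset.mem_univ _, hadj' i v⟩
    unfold vertexLabelSum
    simp only [Sym2.lift_mk]
    rw [Finset.sum_add_distrib, Finset.sum_add_distrib]
    have e1 : (∑ _u ∈ Finset.univ.filter (fun u => G.Adj v u), g) = (r : ZMod k) * g := by
      rw [Finset.sum_const, hdeg v, nsmul_eq_mul]
    have e2 : (∑ u ∈ Finset.univ.filter (fun u => G.Adj v u), S1 v u) = s := by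
      rw [hS1d]
      dsimp only
      rw [Finset.sum_comm, ← ha1]
      refine Finset.sum_congr rfl fun i _ => ?_
      rw [Finset.sum_ite_eq, if_pos (hmem i)]
    have e3 : (∑ u ∈ Finset.univ.filter (fun u => G.Adj v u), S1 u v) = s := by
      rw [hS1d]
      dsimp only
      rw [Finset.sum_comm, ← ha1]
      refine Finset.sum_congr rfl fun i _ => ?_
      rw [Finset.sum_eq_single ((σ i)⁻¹ v)]
      · rw [if_pos (Equiv.Perm.eq_inv_iff_eq.mp rfl : (σ i) ((σ i)⁻¹ v) = v)]
      · intro b hb hbne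
        rw [if_neg]
        intro hbv
        exact hbne (by rw [← hbv, (Equiv.Perm.inv_eq_iff_eq.mpr rfl : (σ i)⁻¹ ((σ i) b) = b)])
      · intro habs
        exact absurd (hmem' i) habs
    rw [e1, e2, e3]
    exact hgs
end

section
/- Let k ≥ 5 be an odd integer and G a 2r-regular finite simple graph of order n ≥ 3, where r ≥ 2. If n is odd, then G is completely k-magic. -/
section Aux

/-- Double counting swap. -/
private lemma count_swap {α β : Type*} (S : Finset α) (W : Finset β) (R : α → β → Prop)
    [∀ a b, Decidable (R a b)] :
    ∑ a ∈ S, (W.filter (fun b => R a b)).card = ∑ b ∈ W, (S.filter (fun a => R a b)).card := by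
  simp_rw [Finset.card_filter]
  exact Finset.sum_comm

/-- An edge of a simple graph has exactly two endpoints. -/
private lemma endpoints_card {V : Type*} [Fintype V] [DecidableEq V] (G : SimpleGraph V)
    {e : Sym2 V} (he : e ∈ G.edgeSet) :
    (Finset.univ.filter (fun v => v ∈ e)).card = 2 := by
  induction e with
  | _ a b =>
    have hab : a ≠ b := G.ne_of_adj he
    have h : (Finset.univ.filter (fun v => v ∈ s(a, b))) = {a, b} := by
      ext x; simp [Sym2.mem_iff]
    rw [h, Finset.card_insert_of_notMem (by simp [hab]), Finset.card_singleton]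

end Aux

open Finset

section PermDecomp

open Classical

variable {V : Type*} [Fintype V]

/-- Decompose a relation with all out- and in-degrees equal to `r` into `r` permutations. -/
private lemma perm_decomp :
    ∀ (r : ℕ) (D : V → V → Prop),
      (∀ v, (univ.filter (fun u => D v u)).card = r) →
      (∀ v, (univ.filter (fun u => D u v)).card = r) →
      ∃ σ : Fin r → Equiv.Perm V, (∀ i v, D v (σ i v)) ∧
        (∀ v, Function.Injective (fun i => σ i v)) := by
  intro r
  induction r with
  | zero => exact fun D _ _ => ⟨Fin.elim0, fun i => i.elim0, fun v i => i.elim0⟩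
  | succ r ih =>
    intro D hout hin
    classical
    -- Hall's condition
    have hall : ∀ s : Finset V,
        s.card ≤ (s.biUnion (fun v => univ.filter (fun u => D v u))).card := by
      intro s
      set T := s.biUnion (fun v => univ.filter (fun u => D v u)) with hT
      have key : (r + 1) * s.card ≤ (r + 1) * T.card := by
        calc (r + 1) * s.card = ∑ v ∈ s, (r + 1) := by
              rw [Finset.sum_const, smul_eq_mul, mul_comm]
          _ = ∑ v ∈ s, (univ.filter (fun u => D v u)).card := by
              exact Finset.sum_congr rfl fun v _ => (hout v).symm
          _ = ∑ v ∈ s, (T.filter (fun u => D v u)).card := by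
              refine Finset.sum_congr rfl fun v hv => ?_
              congr 1
              apply Finset.Subset.antisymm
              · intro u hu
                rw [Finset.mem_filter] at hu ⊢
                exact ⟨Finset.mem_biUnion.mpr ⟨v, hv, by simp [hu.2]⟩, hu.2⟩
              · intro u hu
                rw [Finset.mem_filter] at hu ⊢
                exact ⟨Finset.mem_univ _, hu.2⟩
          _ = ∑ u ∈ T, (s.filter (fun v => D v u)).card := count_swap s T _
          _ ≤ ∑ u ∈ T, (univ.filter (fun v => D v u)).card := by
              refine Finset.sum_le_sum fun u _ => ?_
              exact Finset.card_le_card (Finset.filter_subset_filter _ (Finset.subset_univ s))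
          _ = ∑ u ∈ T, (r + 1) := Finset.sum_congr rfl fun u _ => hin u
          _ = (r + 1) * T.card := by rw [Finset.sum_const, smul_eq_mul, mul_comm]
      exact Nat.le_of_mul_le_mul_left key (Nat.succ_pos r)
    obtain ⟨f, hfinj, hf⟩ :=
      (Finset.all_card_le_biUnion_card_iff_exists_injective
        (fun v => univ.filter (fun u => D v u))).mp hall
    have hfD : ∀ v, D v (f v) := fun v => (Finset.mem_filter.mp (hf v)).2
    let π : Equiv.Perm V := Equiv.ofBijective f (Finite.injective_iff_bijective.mp hfinj)
    have hπ : ∀ v, π v = f v := fun v => rfl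
    set D' : V → V → Prop := fun u v => D u v ∧ v ≠ f u with hD'
    have hout' : ∀ v, (@Finset.filter _ (fun u => D' v u) (fun u => Classical.propDecidable _) univ).card = r := by
      intro v
      have : (@Finset.filter _ (fun u => D' v u) (fun u => Classical.propDecidable _) univ)
          = (univ.filter (fun u => D v u)).erase (f v) := by
        ext u
        simp only [hD', Finset.mem_filter, Finset.mem_erase, Finset.mem_univ, true_and]
        tauto
      rw [this, Finset.card_erase_of_mem (by simp [hfD v]), hout v]
      omega
    have hin' : ∀ v, (@Finset.filter _ (fun u => D' u v) (fun u => Classical.propDecidable _) univ).card = r := by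
      intro v
      have hfsymm : f (π.symm v) = v := π.apply_symm_apply v
      have : (@Finset.filter _ (fun u => D' u v) (fun u => Classical.propDecidable _) univ)
          = (univ.filter (fun u => D u v)).erase (π.symm v) := by
        ext u
        simp only [hD', Finset.mem_filter, Finset.mem_erase, Finset.mem_univ, true_and]
        constructor
        · rintro ⟨h1, h2⟩
          refine ⟨fun h => h2 ?_, h1⟩
          rw [h, hfsymm]
        · rintro ⟨h1, h2⟩
          refine ⟨h2, fun h => h1 ?_⟩
          apply hfinj
          rw [hfsymm, h]
      have hmem : π.symm v ∈ univ.filter (fun u => D u v) := by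
        simp only [Finset.mem_filter, Finset.mem_univ, true_and]
        have := hfD (π.symm v)
        rwa [hfsymm] at this
      rw [this, Finset.card_erase_of_mem hmem, hin v]
      omega
    obtain ⟨σ', h1, h2⟩ := ih D' hout' hin'
    refine ⟨Fin.cons π σ', ?_, ?_⟩
    · intro i v
      refine Fin.cases ?_ ?_ i
      · exact hfD v
      · intro j; simpa using (h1 j v).1
    · intro v i j hij
      simp only at hij
      rcases Fin.eq_zero_or_eq_succ i with rfl | ⟨i', rfl⟩ <;>
        rcases Fin.eq_zero_or_eq_succ j with rfl | ⟨j', rfl⟩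
      · rfl
      · exfalso
        rw [Fin.cons_zero, Fin.cons_succ] at hij
        exact (h1 j' v).2 (by rw [← hij]; exact (hπ v).symm)
      · exfalso
        rw [Fin.cons_succ, Fin.cons_zero] at hij
        exact (h1 i' v).2 (by rw [hij]; exact (hπ v).symm)
      · rw [Fin.cons_succ, Fin.cons_succ] at hij
        exact congrArg Fin.succ (h2 v hij)

end PermDecomp
section Tail

variable {V : Type*} [Fintype V] [DecidableEq V] (G : SimpleGraph V) [DecidableRel G.Adj]

/-- Incidence count equals degree count. -/
private lemma incidence_count (v : V) :
    (G.edgeFinset.filter (fun e => v ∈ e)).card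
      = (Finset.univ.filter (fun u => G.Adj v u)).card := by
  apply Finset.card_bij (fun e he => Sym2.Mem.other (Finset.mem_filter.mp he).2)
  · intro e he
    obtain ⟨he1, he2⟩ := Finset.mem_filter.mp he
    simp only [Finset.mem_filter, Finset.mem_univ, true_and]
    have hsp := Sym2.other_spec he2
    have h : s(v, Sym2.Mem.other he2) ∈ G.edgeSet := by
      rw [hsp]; exact SimpleGraph.mem_edgeFinset.mp he1
    rwa [SimpleGraph.mem_edgeSet] at h
  · intro e1 he1 e2 he2 h
    have h1 := Sym2.other_spec (Finset.mem_filter.mp he1).2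
    have h2 := Sym2.other_spec (Finset.mem_filter.mp he2).2
    rw [← h1, ← h2, h]
  · intro u hu
    have hadj : G.Adj v u := (Finset.mem_filter.mp hu).2
    have hmem : s(v, u) ∈ G.edgeFinset.filter (fun e => v ∈ e) := by
      simp only [Finset.mem_filter, SimpleGraph.mem_edgeFinset]
      exact ⟨hadj, Sym2.mem_mk_left v u⟩
    refine ⟨s(v, u), hmem, ?_⟩
    have hsp := Sym2.other_spec (Finset.mem_filter.mp hmem).2
    rcases Sym2.eq_iff.mp hsp with ⟨-, h2⟩ | ⟨h1, -⟩
    · exact h2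
    · exact absurd h1 (G.ne_of_adj hadj)

/-- The number of edges is `r * |V|` in a `2r`-regular graph. -/
private lemma edge_count (r : ℕ)
    (hreg : ∀ v, (Finset.univ.filter (fun u => G.Adj v u)).card = 2 * r) :
    G.edgeFinset.card = r * Fintype.card V := by
  have h1 : ∑ v : V, (G.edgeFinset.filter (fun e => v ∈ e)).card
      = ∑ e ∈ G.edgeFinset, (Finset.univ.filter (fun v => v ∈ e)).card :=
    (count_swap G.edgeFinset Finset.univ (fun e v => v ∈ e)).symm
  have h2 : ∑ e ∈ G.edgeFinset, (Finset.univ.filter (fun v => v ∈ e)).card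
      = 2 * G.edgeFinset.card := by
    rw [Finset.sum_congr rfl (fun e he => endpoints_card G (SimpleGraph.mem_edgeFinset.mp he))]
    rw [Finset.sum_const, smul_eq_mul, mul_comm]
  have h3 : ∑ v : V, (G.edgeFinset.filter (fun e => v ∈ e)).card
      = 2 * (r * Fintype.card V) := by
    rw [Finset.sum_congr rfl (fun v _ => (incidence_count G v).trans (hreg v))]
    rw [Finset.sum_const, smul_eq_mul, Finset.card_univ]
    ring
  have h4 := h3.symm.trans (h1.trans h2)
  exact (Nat.eq_of_mul_eq_mul_left (by norm_num) h4).symm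

/-- Balanced orientation: a choice of tail for each edge such that every vertex is the
tail of exactly `r` edges. -/
private lemma exists_tail (r : ℕ) (hr : 1 ≤ r)
    (hreg : ∀ v, (Finset.univ.filter (fun u => G.Adj v u)).card = 2 * r) :
    ∃ tl : Sym2 V → V, (∀ e ∈ G.edgeSet, tl e ∈ e) ∧
      ∀ v, (G.edgeFinset.filter (fun e => tl e = v)).card = r := by
  set t : {e : Sym2 V // e ∈ G.edgeFinset} → Finset (V × Fin r) :=
    fun e => (Finset.univ.filter (fun v => v ∈ (e : Sym2 V))) ×ˢ Finset.univ with ht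
  have hall : ∀ s : Finset {e : Sym2 V // e ∈ G.edgeFinset}, s.card ≤ (s.biUnion t).card := by
    intro s
    set W := s.biUnion (fun e => Finset.univ.filter (fun v => v ∈ (e : Sym2 V))) with hW
    set S := s.image Subtype.val with hS
    have hScard : S.card = s.card := Finset.card_image_of_injective s Subtype.val_injective
    have hSsub : S ⊆ G.edgeFinset := by
      intro e he
      obtain ⟨e', -, rfl⟩ := Finset.mem_image.mp he
      exact e'.2
    have hbi : s.biUnion t = W ×ˢ (Finset.univ : Finset (Fin r)) := by
      ext ⟨w, j⟩
      simp only [ht, hW, Finset.mem_biUnion, Finset.mem_product, Finset.mem_filter,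
        Finset.mem_univ, true_and, and_true]
    have key : 2 * s.card ≤ 2 * (W.card * r) := by
      calc 2 * s.card = ∑ _e ∈ S, 2 := by
            rw [Finset.sum_const, smul_eq_mul, mul_comm, hScard]
        _ = ∑ e ∈ S, (W.filter (fun v => v ∈ e)).card := by
            refine Finset.sum_congr rfl fun e he => ?_
            have hsub : Finset.univ.filter (fun v => v ∈ e) ⊆ W := by
              obtain ⟨e', he', rfl⟩ := Finset.mem_image.mp he
              intro x hx
              exact Finset.mem_biUnion.mpr ⟨e', he', hx⟩
            have heq : W.filter (fun v => v ∈ e) = Finset.univ.filter (fun v => v ∈ e) := by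
              apply Finset.Subset.antisymm
              · exact Finset.filter_subset_filter _ (Finset.subset_univ W)
              · intro x hx
                rw [Finset.mem_filter] at hx ⊢
                exact ⟨hsub (Finset.mem_filter.mpr ⟨Finset.mem_univ x, hx.2⟩), hx.2⟩
            rw [heq, endpoints_card G (SimpleGraph.mem_edgeFinset.mp (hSsub he))]
        _ = ∑ w ∈ W, (S.filter (fun e => w ∈ e)).card := count_swap S W _
        _ ≤ ∑ w ∈ W, (G.edgeFinset.filter (fun e => w ∈ e)).card :=
            Finset.sum_le_sum fun w _ =>
              Finset.card_le_card (Finset.filter_subset_filter _ hSsub)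
        _ = ∑ _w ∈ W, 2 * r := Finset.sum_congr rfl fun w _ =>
              (incidence_count G w).trans (hreg w)
        _ = 2 * (W.card * r) := by rw [Finset.sum_const, smul_eq_mul]; ring
    have hsW : s.card ≤ W.card * r := by omega
    rw [hbi, Finset.card_product, Finset.card_univ, Fintype.card_fin]
    exact hsW
  obtain ⟨g, hginj, hg⟩ := (Finset.all_card_le_biUnion_card_iff_exists_injective t).mp hall
  have hg1 : ∀ e : {e' : Sym2 V // e' ∈ G.edgeFinset}, (g e).1 ∈ (e : Sym2 V) := by
    intro e
    have h := hg e
    rw [ht] at h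
    exact (Finset.mem_filter.mp (Finset.mem_product.mp h).1).2
  set tl : Sym2 V → V := fun e => if h : e ∈ G.edgeFinset then (g ⟨e, h⟩).1 else e.out.1
    with htl
  have htl_pos : ∀ (e : Sym2 V) (h : e ∈ G.edgeFinset), tl e = (g ⟨e, h⟩).1 :=
    fun e h => dif_pos h
  refine ⟨tl, ?_, ?_⟩
  · intro e he
    rw [htl_pos e (SimpleGraph.mem_edgeFinset.mpr he)]
    exact hg1 _
  · intro v
    have hle : ∀ w : V, (G.edgeFinset.filter (fun e => tl e = w)).card ≤ r := by
      intro w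
      have hcard : (G.edgeFinset.filter (fun e => tl e = w)).card
          ≤ (Finset.univ : Finset (Fin r)).card := by
        apply Finset.card_le_card_of_injOn
          (fun e => if h : e ∈ G.edgeFinset then (g ⟨e, h⟩).2 else ⟨0, hr⟩)
        · intro e _; exact Finset.mem_univ _
        · intro e1 he1 e2 he2 hcoords
          rw [Finset.mem_coe, Finset.mem_filter] at he1 he2
          obtain ⟨he1m, he1t⟩ := he1
          obtain ⟨he2m, he2t⟩ := he2
          rw [htl_pos e1 he1m] at he1t
          rw [htl_pos e2 he2m] at he2t
          dsimp only at hcoords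
          rw [dif_pos he1m, dif_pos he2m] at hcoords
          have hgeq : g ⟨e1, he1m⟩ = g ⟨e2, he2m⟩ :=
            Prod.ext (he1t.trans he2t.symm) hcoords
          exact congrArg Subtype.val (hginj hgeq)
      simpa using hcard
    have hsum : ∑ w : V, (G.edgeFinset.filter (fun e => tl e = w)).card
        = G.edgeFinset.card :=
      (Finset.card_eq_sum_card_fiberwise (fun e _ => Finset.mem_univ _)).symm
    have hE : G.edgeFinset.card = r * Fintype.card V := edge_count G r hreg
    by_contra hv
    have hvlt : (G.edgeFinset.filter (fun e => tl e = v)).card < r :=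
      lt_of_le_of_ne (hle v) hv
    have hlt : ∑ w : V, (G.edgeFinset.filter (fun e => tl e = w)).card < ∑ _w : V, r :=
      Finset.sum_lt_sum (fun w _ => hle w) ⟨v, Finset.mem_univ v, hvlt⟩
    rw [hsum, hE, Finset.sum_const, smul_eq_mul, Finset.card_univ,
      Nat.mul_comm (Fintype.card V) r] at hlt
    omega

end Tail
section Coeffs

/-- Choice of `r` nonzero coefficients with prescribed doubled sum. -/
private lemma exists_coeffs (r k : ℕ) (hr : 2 ≤ r) (hk : 5 ≤ k) (hkodd : Odd k) (c : ZMod k) :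
    ∃ a : Fin r → ZMod k, (∀ i, a i ≠ 0) ∧ (∑ i, a i) + (∑ i, a i) = c := by
  haveI : Fact (1 < k) := ⟨by omega⟩
  obtain ⟨m, hm⟩ := hkodd
  have hhalf : ((m + 1 : ℕ) : ZMod k) + ((m + 1 : ℕ) : ZMod k) = 1 := by
    have h2 : ((2 * m + 2 : ℕ) : ZMod k) = ((k + 1 : ℕ) : ZMod k) := by rw [hm]
    have h3 : ((k + 1 : ℕ) : ZMod k) = 1 := by
      push_cast [ZMod.natCast_self]; ring
    calc ((m + 1 : ℕ) : ZMod k) + ((m + 1 : ℕ) : ZMod k)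
        = ((2 * m + 2 : ℕ) : ZMod k) := by push_cast; ring
      _ = 1 := by rw [h2, h3]
  set c' : ZMod k := ((m + 1 : ℕ) : ZMod k) * c with hc'
  have hcc : c' + c' = c := by rw [hc', ← add_mul, hhalf, one_mul]
  set t : ZMod k := c' - (r : ℕ) + 2 with htdef
  obtain ⟨x, y, hx, hy, hxy⟩ : ∃ x y : ZMod k, x ≠ 0 ∧ y ≠ 0 ∧ x + y = t := by
    by_cases h1 : t = 1
    · refine ⟨2, -1, ?_, ?_, by rw [h1]; ring⟩
      · intro h
        have h2 : ((2 : ℕ) : ZMod k) = 0 := by push_cast; exact h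
        rw [ZMod.natCast_eq_zero_iff] at h2
        have := Nat.le_of_dvd (by norm_num) h2
        omega
      · simp
    · exact ⟨1, t - 1, one_ne_zero, sub_ne_zero_of_ne h1, by ring⟩
  have h0r : (0 : ℕ) < r := by omega
  have h1r : (1 : ℕ) < r := hr
  set i0 : Fin r := ⟨0, h0r⟩ with hi0
  set i1 : Fin r := ⟨1, h1r⟩ with hi1
  have hne : i0 ≠ i1 := by
    intro h
    rw [hi0, hi1, Fin.mk.injEq] at h
    omega
  refine ⟨fun i => 1 + (if i = i0 then x - 1 else 0) + (if i = i1 then y - 1 else 0), ?_, ?_⟩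
  · intro i
    dsimp only
    rcases eq_or_ne i i0 with rfl | h0
    · rw [if_pos rfl, if_neg hne]
      intro h; apply hx; linear_combination h
    · rw [if_neg h0]
      rcases eq_or_ne i i1 with rfl | h1
      · rw [if_pos rfl]
        intro h; apply hy; linear_combination h
      · rw [if_neg h1]
        intro h
        exact one_ne_zero (by linear_combination h)
  · have hsum : (∑ i : Fin r,
        (1 + (if i = i0 then x - 1 else 0) + (if i = i1 then y - 1 else 0) : ZMod k))
        = (r : ZMod k) + (x - 1) + (y - 1) := by
      rw [Finset.sum_add_distrib, Finset.sum_add_distrib]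
      congr 1
      · congr 1
        · rw [Finset.sum_const, Finset.card_univ, Fintype.card_fin, nsmul_eq_mul, mul_one]
        · rw [Finset.sum_ite_eq' Finset.univ i0 (fun _ => x - 1)]
          simp
      · rw [Finset.sum_ite_eq' Finset.univ i1 (fun _ => y - 1)]
        simp
    rw [hsum]
    have h' : x + y = c' - (r : ℕ) + 2 := by rw [hxy, htdef]
    have h'' : (r : ZMod k) + (x - 1) + (y - 1) = c' := by
      push_cast at h' ⊢
      linear_combination h'
    rw [h'', hcc]

end Coeffs
/-- A `2r`-regular graph of odd order `n ≥ 3` is completely `k`-magic for odd `k ≥ 5`. -/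
theorem even_regular_odd_order_completely_magic {V : Type*} [Fintype V]
    (G : SimpleGraph V) (r k : ℕ) (hr : 2 ≤ r) (hk : 5 ≤ k) (hkodd : Odd k)
    (hreg : IsRegularDeg G (2 * r)) (hn : 3 ≤ Fintype.card V)
    (hodd : Odd (Fintype.card V)) :
    CompletelyMagic G k := by
  classical
  intro c
  haveI : Fact (1 < k) := ⟨by omega⟩
  have hreg' : ∀ v : V, (Finset.univ.filter (fun u => G.Adj v u)).card = 2 * r :=
    fun v => hreg v
  obtain ⟨tl, htl1, htl2⟩ := exists_tail G r (by omega) hreg'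
  obtain ⟨D, hD⟩ : ∃ D : V → V → Prop, ∀ u v, D u v ↔ (G.Adj u v ∧ tl s(u, v) = u) :=
    ⟨fun u v => G.Adj u v ∧ tl s(u, v) = u, fun _ _ => Iff.rfl⟩
  have hanti : ∀ u v, D u v → ¬ D v u := by
    intro u v h h'
    obtain ⟨hadj, h1⟩ := (hD u v).mp h
    obtain ⟨hadj', h2⟩ := (hD v u).mp h'
    rw [Sym2.eq_swap] at h2
    exact G.ne_of_adj hadj (h1.symm.trans h2)
  have houtmap : ∀ v, (Finset.univ.filter (fun u => D v u)).card = r := by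
    intro v
    rw [← htl2 v]
    apply Finset.card_bij (fun u _ => s(v, u))
    · intro u hu
      have hu' := (hD v u).mp (Finset.mem_filter.mp hu).2
      exact Finset.mem_filter.mpr ⟨SimpleGraph.mem_edgeFinset.mpr hu'.1, hu'.2⟩
    · intro u1 _ u2 _ h
      exact Sym2.congr_right.mp h
    · intro e he
      obtain ⟨hef, het⟩ := Finset.mem_filter.mp he
      have hve : v ∈ e := by rw [← het]; exact htl1 e (SimpleGraph.mem_edgeFinset.mp hef)
      have hadj : G.Adj v (Sym2.Mem.other hve) := by
        have h := SimpleGraph.mem_edgeFinset.mp hef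
        rw [← Sym2.other_spec hve, SimpleGraph.mem_edgeSet] at h
        exact h
      refine ⟨Sym2.Mem.other hve,
        Finset.mem_filter.mpr ⟨Finset.mem_univ _, (hD v _).mpr ⟨hadj, ?_⟩⟩,
        Sym2.other_spec hve⟩
      rw [Sym2.other_spec hve]
      exact het
  have hinmap : ∀ v, (Finset.univ.filter (fun u => D u v)).card = r := by
    intro v
    have h1 : (Finset.univ.filter (fun u => G.Adj v u)).filter (fun u => tl s(v, u) = v)
        = Finset.univ.filter (fun u => D v u) := by
      ext u
      simp only [Finset.mem_filter, Finset.mem_univ, true_and, hD]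
    have h2 : (Finset.univ.filter (fun u => G.Adj v u)).filter (fun u => ¬ (tl s(v, u) = v))
        = Finset.univ.filter (fun u => D u v) := by
      ext u
      simp only [Finset.mem_filter, Finset.mem_univ, true_and, hD]
      constructor
      · rintro ⟨hadj, hne⟩
        refine ⟨hadj.symm, ?_⟩
        have hmem : tl s(v, u) ∈ s(v, u) :=
          htl1 _ ((SimpleGraph.mem_edgeSet G).mpr hadj)
        rcases Sym2.mem_iff.mp hmem with h | h
        · exact absurd h hne
        · rw [Sym2.eq_swap]; exact h
      · rintro ⟨hadj, htu⟩
        refine ⟨hadj.symm, fun hv => ?_⟩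
        rw [Sym2.eq_swap] at hv
        exact G.ne_of_adj hadj (htu.symm.trans hv)
    have hsplit := Finset.card_filter_add_card_filter_not
      (s := Finset.univ.filter (fun u => G.Adj v u)) (p := fun u => tl s(v, u) = v)
    rw [h1, h2, hreg' v, houtmap v] at hsplit
    omega
  obtain ⟨σ, hσD, hσinj⟩ := perm_decomp r D houtmap hinmap
  have hC3 : ∀ (v : V) (i j : Fin r), σ j (σ i v) ≠ v := by
    intro v i j h
    have d1 := hσD i v
    have d2 := hσD j (σ i v)
    rw [h] at d2
    exact hanti _ _ d1 d2
  have huniq : ∀ (i : Fin r) (v : V) (j : Fin r) (u : V),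
      s(v, σ i v) = s(u, σ j u) → i = j := by
    intro i v j u h
    rcases Sym2.eq_iff.mp h with ⟨rfl, h2⟩ | ⟨h1, h2⟩
    · exact hσinj v h2
    · exfalso
      apply hC3 v i j
      rw [h2, ← h1]
  obtain ⟨a, ha0, hasum⟩ := exists_coeffs r k hr hk hkodd c
  set ℓ : Sym2 V → ZMod k := fun e =>
    if h : ∃ p : Fin r × V, e = s(p.2, σ p.1 p.2) then a (Classical.choose h).1 else 1 with hℓ
  have hkey : ∀ (i : Fin r) (v : V), ℓ s(v, σ i v) = a i := by
    intro i v
    have hex : ∃ p : Fin r × V, s(v, σ i v) = s(p.2, σ p.1 p.2) := ⟨(i, v), rfl⟩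
    rw [hℓ]
    dsimp only
    rw [dif_pos hex]
    have hsp := Classical.choose_spec hex
    exact congrArg a
      (huniq i v (Classical.choose hex).1 (Classical.choose hex).2 hsp).symm
  refine ⟨ℓ, ⟨fun e _ => ?_, fun v => ?_⟩⟩
  · rw [hℓ]
    dsimp only
    split_ifs with h
    · exact ha0 _
    · exact one_ne_zero
  · show (∑ u ∈ Finset.univ.filter (fun u => G.Adj v u), ℓ s(v, u)) = c
    set A := Finset.univ.image (fun i : Fin r => σ i v) with hA
    set B := Finset.univ.image (fun i : Fin r => (σ i).symm v) with hB
    have hBinj : Function.Injective (fun i : Fin r => (σ i).symm v) := by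
      intro i j h
      dsimp only at h
      apply hσinj ((σ i).symm v)
      show σ i ((σ i).symm v) = σ j ((σ i).symm v)
      rw [Equiv.apply_symm_apply, h, Equiv.apply_symm_apply]
    have hdisj : Disjoint A B := by
      rw [Finset.disjoint_left]
      intro x hxA hxB
      obtain ⟨i, -, rfl⟩ := Finset.mem_image.mp hxA
      obtain ⟨j, -, hj⟩ := Finset.mem_image.mp hxB
      exact hC3 v i j (by rw [← hj, Equiv.apply_symm_apply])
    have hsubA : A ⊆ Finset.univ.filter (fun u => G.Adj v u) := by
      intro x hx
      obtain ⟨i, -, rfl⟩ := Finset.mem_image.mp hx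
      exact Finset.mem_filter.mpr ⟨Finset.mem_univ _, ((hD v _).mp (hσD i v)).1⟩
    have hsubB : B ⊆ Finset.univ.filter (fun u => G.Adj v u) := by
      intro x hx
      obtain ⟨i, -, rfl⟩ := Finset.mem_image.mp hx
      have h := ((hD _ _).mp (hσD i ((σ i).symm v))).1
      rw [Equiv.apply_symm_apply] at h
      exact Finset.mem_filter.mpr ⟨Finset.mem_univ _, h.symm⟩
    have hcardA : A.card = r := by
      rw [hA, Finset.card_image_of_injective _ (hσinj v), Finset.card_univ, Fintype.card_fin]
    have hcardB : B.card = r := by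
      rw [hB, Finset.card_image_of_injective _ hBinj, Finset.card_univ, Fintype.card_fin]
    have hunion : A ∪ B = Finset.univ.filter (fun u => G.Adj v u) := by
      apply Finset.eq_of_subset_of_card_le (Finset.union_subset hsubA hsubB)
      rw [Finset.card_union_of_disjoint hdisj, hcardA, hcardB, hreg' v]
      omega
    rw [← hunion, Finset.sum_union hdisj]
    have hsA : ∑ u ∈ A, ℓ s(v, u) = ∑ i : Fin r, a i := by
      rw [hA, Finset.sum_image (fun i _ j _ h => hσinj v h)]
      exact Finset.sum_congr rfl fun i _ => hkey i v
    have hsB : ∑ u ∈ B, ℓ s(v, u) = ∑ i : Fin r, a i := by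
      rw [hB, Finset.sum_image (fun i _ j _ h => hBinj h)]
      refine Finset.sum_congr rfl fun i _ => ?_
      have h1 : s(v, (σ i).symm v) = s((σ i).symm v, σ i ((σ i).symm v)) := by
        rw [Equiv.apply_symm_apply, Sym2.eq_swap]
      rw [h1, hkey i ((σ i).symm v)]
    rw [hsA, hsB, hasum]
end

section
/- Let r ≥ 3 and G an r-regular finite simple graph that is zero-sum 4-magic. If the order of G is odd, then the sum spectrum Σ_4(G) equals {0, 2} ⊆ ℤ_4. -/
namespace ZSM

variable {V : Type*} [DecidableEq V]

def arcs : List V → List (V × V)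
  | a :: b :: rest => (a, b) :: arcs (b :: rest)
  | _ => []

def tEdges (l : List V) : List (Sym2 V) := (arcs l).map (fun p => s(p.1, p.2))

@[simp] lemma arcs_pair (a b : V) (rest : List V) :
    arcs (a :: b :: rest) = (a, b) :: arcs (b :: rest) := rfl

@[simp] lemma arcs_single (a : V) : arcs [a] = [] := rfl

@[simp] lemma tEdges_cons (a b : V) (rest : List V) :
    tEdges (a :: b :: rest) = s(a, b) :: tEdges (b :: rest) := rfl

@[simp] lemma tEdges_single (a : V) : tEdges [a] = [] := rfl

lemma arcs_concat : ∀ (l : List V) (a w : V),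
    arcs ((a :: l) ++ [w]) = arcs (a :: l) ++ [((a :: l).getLast (by simp), w)]
  | [], a, w => by simp
  | b :: rest, a, w => by
    have := arcs_concat rest b w
    simp only [List.cons_append, arcs_pair] at this ⊢
    rw [this]
    simp [List.getLast]

lemma tEdges_concat (l : List V) (a w : V) :
    tEdges ((a :: l) ++ [w]) = tEdges (a :: l) ++ [s((a :: l).getLast (by simp), w)] := by
  unfold tEdges
  rw [arcs_concat, List.map_append]
  rfl

lemma map_fst_arcs : ∀ (l : List V) (a : V),
    (arcs (a :: l)).map Prod.fst = (a :: l).dropLast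
  | [], a => by simp
  | b :: rest, a => by
    have := map_fst_arcs rest b
    simp only [arcs_pair, List.map_cons] at this ⊢
    rw [this]
    rfl

lemma map_snd_arcs : ∀ (l : List V) (a : V),
    (arcs (a :: l)).map Prod.snd = l
  | [], a => by simp
  | b :: rest, a => by
    have := map_snd_arcs rest b
    simp only [arcs_pair, List.map_cons] at this ⊢
    rw [this]

lemma parity_countP (z : V) : ∀ (l : List V) (a : V),
    (∀ e ∈ tEdges (a :: l), ¬ e.IsDiag) →
    ((tEdges (a :: l)).countP (fun e => decide (z ∈ e))
      + (if z = a then 1 else 0)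
      + (if z = (a :: l).getLast (by simp) then 1 else 0)) % 2 = 0
  | [], a, _ => by
    simp only [tEdges_single, List.countP_nil, List.getLast_singleton]
    by_cases h : z = a <;> simp [h]
  | b :: rest, a, hnd => by
    have hab : a ≠ b := by
      have := hnd s(a, b) (by simp)
      simpa [Sym2.mk_isDiag_iff] using this
    have IH := parity_countP z rest b (fun e he => hnd e (by simp [he]))
    have hlast : (a :: b :: rest).getLast (by simp) = (b :: rest).getLast (by simp) := by
      simp [List.getLast]
    rw [tEdges_cons, List.countP_cons, hlast]
    have hmem : (decide (z ∈ s(a, b)) : Bool) = decide (z = a ∨ z = b) := by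
      simp [Sym2.mem_iff]
    rw [hmem]
    by_cases hza : z = a <;> by_cases hzb : z = b <;>
      simp only [hza, hzb] <;> simp_all <;> omega



set_option linter.unusedSectionVars false

lemma countP_toFinset {α : Type*} [DecidableEq α] (p : α → Prop) [DecidablePred p]
    (T : List α) (h : T.Nodup) :
    (T.toFinset.filter p).card = T.countP (fun e => decide (p e)) := by
  rw [List.countP_eq_length_filter]
  have : T.toFinset.filter p = (T.filter (fun e => decide (p e))).toFinset := by
    rw [List.toFinset_filter]
    apply Finset.filter_congr
    intro x _
    simp
  rw [this, List.toFinset_card_of_nodup (h.filter _)]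

/-- Key step: a non-closed trail with all degrees even can be extended by an unused edge. -/
lemma exists_unused_edge (E : Finset (Sym2 V))
    (hnd : ∀ e ∈ E, ¬ e.IsDiag)
    (heven : ∀ v : V, (E.filter (fun e => v ∈ e)).card % 2 = 0)
    (a : V) (l : List V)
    (hsub : ∀ e ∈ tEdges (a :: l), e ∈ E) (hnodup : (tEdges (a :: l)).Nodup)
    (hopen : (a :: l).getLast (by simp) ≠ a) :
    ∃ e ∈ E, ((a :: l).getLast (by simp)) ∈ e ∧ e ∉ tEdges (a :: l) := by
  set z := (a :: l).getLast (by simp) with hz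
  by_contra hcon
  push_neg at hcon
  -- all edges of E at z are used
  have hall : E.filter (fun e => z ∈ e) ⊆ (tEdges (a :: l)).toFinset.filter (fun e => z ∈ e) := by
    intro e he
    rw [Finset.mem_filter] at he ⊢
    exact ⟨List.mem_toFinset.2 (hcon e he.1 he.2), he.2⟩
  have hsub2 : (tEdges (a :: l)).toFinset.filter (fun e => z ∈ e) ⊆
      E.filter (fun e => z ∈ e) := by
    intro e he
    rw [Finset.mem_filter] at he ⊢
    exact ⟨hsub e (List.mem_toFinset.1 he.1), he.2⟩
  have hcard : ((tEdges (a :: l)).toFinset.filter (fun e => z ∈ e)).card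
      = (E.filter (fun e => z ∈ e)).card := by
    exact le_antisymm (Finset.card_le_card hsub2) (Finset.card_le_card hall)
  have hparity := parity_countP z l a (fun e he => hnd e (hsub e he))
  rw [countP_toFinset _ _ hnodup] at hcard
  have hza : (if z = a then (1:ℕ) else 0) = 0 := by simp [hopen]
  have hzz : (if z = (a :: l).getLast (by simp) then (1:ℕ) else 0) = 1 := by simp [hz]
  rw [hza, hzz] at hparity
  have := heven z
  omega

lemma closed_trail_step (E : Finset (Sym2 V))
    (hnd : ∀ e ∈ E, ¬ e.IsDiag)
    (heven : ∀ v : V, (E.filter (fun e => v ∈ e)).card % 2 = 0) :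
    ∀ (k : ℕ) (a : V) (l : List V), l ≠ [] →
    (∀ e ∈ tEdges (a :: l), e ∈ E) → (tEdges (a :: l)).Nodup →
    E.card ≤ (tEdges (a :: l)).length + k →
    ∃ (a' : V) (l' : List V), l' ≠ [] ∧
      (∀ e ∈ tEdges (a' :: l'), e ∈ E) ∧ (tEdges (a' :: l')).Nodup ∧
      (a' :: l').getLast (by simp) = a' := by
  intro k
  induction k with
  | zero =>
    intro a l hne hsub hnodup hlen
    by_cases hcl : (a :: l).getLast (by simp) = a
    · exact ⟨a, l, hne, hsub, hnodup, hcl⟩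
    · exfalso
      obtain ⟨e, heE, hez, heun⟩ := exists_unused_edge E hnd heven a l hsub hnodup hcl
      -- the used edges together with e give > E.card edges
      have h1 : insert e (tEdges (a :: l)).toFinset ⊆ E := by
        intro x hx
        rcases Finset.mem_insert.1 hx with h | h
        · exact h ▸ heE
        · exact hsub x (List.mem_toFinset.1 h)
      have h2 : (insert e (tEdges (a :: l)).toFinset).card
          = (tEdges (a :: l)).length + 1 := by
        rw [Finset.card_insert_of_notMem (fun h => heun (List.mem_toFinset.1 h)),
          List.toFinset_card_of_nodup hnodup]
      have := Finset.card_le_card h1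
      omega
  | succ k IH =>
    intro a l hne hsub hnodup hlen
    by_cases hcl : (a :: l).getLast (by simp) = a
    · exact ⟨a, l, hne, hsub, hnodup, hcl⟩
    · obtain ⟨e, heE, hez, heun⟩ := exists_unused_edge E hnd heven a l hsub hnodup hcl
      set z := (a :: l).getLast (by simp) with hz
      set w := Sym2.Mem.other' hez with hw
      have hzw : s(z, w) = e := Sym2.other_spec' hez
      have hconc := tEdges_concat l a w
      have hsub' : ∀ x ∈ tEdges (a :: (l ++ [w])), x ∈ E := by
        intro x hx
        rw [show (a :: (l ++ [w])) = ((a :: l) ++ [w]) by simp] at hx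
        rw [hconc] at hx
        rcases List.mem_append.1 hx with h | h
        · exact hsub x h
        · simp only [List.mem_singleton] at h
          rw [h, ← hz, hzw]; exact heE
      have hnodup' : (tEdges (a :: (l ++ [w]))).Nodup := by
        rw [show (a :: (l ++ [w])) = ((a :: l) ++ [w]) by simp, hconc]
        rw [List.nodup_append]
        refine ⟨hnodup, List.nodup_singleton _, ?_⟩
        intro x hx
        simp only [List.mem_singleton]
        intro y hy hx'
        rw [hx', hy, ← hz, hzw] at hx
        exact heun hx
      have hlen' : E.card ≤ (tEdges (a :: (l ++ [w]))).length + k := by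
        rw [show (a :: (l ++ [w])) = ((a :: l) ++ [w]) by simp, hconc]
        rw [List.length_append]
        simp only [List.length_singleton]
        omega
      exact IH a (l ++ [w]) (by simp) hsub' hnodup' hlen'

lemma exists_closed_trail (E : Finset (Sym2 V))
    (hnd : ∀ e ∈ E, ¬ e.IsDiag)
    (heven : ∀ v : V, (E.filter (fun e => v ∈ e)).card % 2 = 0)
    (e0 : Sym2 V) (he0 : e0 ∈ E) :
    ∃ (a : V) (l : List V), l ≠ [] ∧
      (∀ e ∈ tEdges (a :: l), e ∈ E) ∧ (tEdges (a :: l)).Nodup ∧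
      (a :: l).getLast (by simp) = a := by
  induction e0 using Sym2.inductionOn with
  | hf a b =>
    have hab : a ≠ b := by
      have := hnd s(a, b) he0
      simpa [Sym2.mk_isDiag_iff] using this
    apply closed_trail_step E hnd heven E.card a [b] (by simp)
    · intro e he
      simp only [tEdges_cons, tEdges_single, List.mem_singleton] at he
      rw [he]; exact he0
    · simp
    · simp

lemma countP_dropLast_eq (v a : V) (l : List V) (hne : l ≠ [])
    (hcl : (a :: l).getLast (by simp) = a) :
    ((a :: l).dropLast).countP (fun x => decide (x = v)) = l.countP (fun x => decide (x = v)) := by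
  have h1 : (a :: l).dropLast ++ [a] = a :: l := by
    conv_rhs => rw [← List.dropLast_append_getLast (l := a :: l) (by simp)]
    rw [hcl]
  have h2 : (a :: l).countP (fun x => decide (x = v))
      = ((a :: l).dropLast).countP (fun x => decide (x = v)) + (if a = v then 1 else 0) := by
    rw [← h1, List.countP_append]
    simp [List.countP_cons]
  have h3 : (a :: l).countP (fun x => decide (x = v))
      = (if a = v then 1 else 0) + l.countP (fun x => decide (x = v)) := by
    rw [List.countP_cons]
    by_cases h : a = v <;> simp [h] <;> omega
  omega

lemma exists_orientation (E : Finset (Sym2 V))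
    (hnd : ∀ e ∈ E, ¬ e.IsDiag)
    (heven : ∀ v : V, (E.filter (fun e => v ∈ e)).card % 2 = 0) :
    ∃ A : Finset (V × V),
      (∀ p ∈ A, s(p.1, p.2) ∈ E) ∧
      (∀ e ∈ E, ∃ p ∈ A, s(p.1, p.2) = e) ∧
      A.card = E.card ∧
      (∀ v : V, (A.filter (fun p => p.1 = v)).card = (A.filter (fun p => p.2 = v)).card) := by
  induction E using Finset.strongInductionOn with
  | _ E IH =>
  rcases Finset.eq_empty_or_nonempty E with rfl | ⟨e0, he0⟩
  · exact ⟨∅, by simp, by simp, by simp, by simp⟩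
  · obtain ⟨a, l, hlne, hsub, hnodup, hcl⟩ := exists_closed_trail E hnd heven e0 he0
    set T := tEdges (a :: l) with hT
    set AL := arcs (a :: l) with hAL
    have hALnodup : AL.Nodup := List.Nodup.of_map _ hnodup
    have hALlen : T.length = AL.length := by rw [hT]; exact List.length_map _
    have hTne : T ≠ [] := by
      obtain ⟨b, rest, rfl⟩ : ∃ b rest, l = b :: rest := by
        cases l with
        | nil => exact absurd rfl hlne
        | cons b rest => exact ⟨b, rest, rfl⟩
      simp [hT]
    have hTF_sub : T.toFinset ⊆ E := by
      intro e he
      exact hsub e (List.mem_toFinset.1 he)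
    set E' := E \ T.toFinset with hE'
    have hss : E' ⊂ E := by
      refine Finset.ssubset_iff_of_subset (Finset.sdiff_subset) |>.2 ?_
      obtain ⟨e, he⟩ := List.exists_mem_of_ne_nil T hTne
      exact ⟨e, hTF_sub (List.mem_toFinset.2 he), by simp [hE', List.mem_toFinset.2 he]⟩
    have hnd' : ∀ e ∈ E', ¬ e.IsDiag := fun e he => hnd e (Finset.sdiff_subset he)
    have hcountP_even : ∀ v : V, T.countP (fun e => decide (v ∈ e)) % 2 = 0 := by
      intro v
      have hp := parity_countP v l a (fun e he => hnd e (hsub e he))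
      rw [hcl] at hp
      rcases eq_or_ne v a with h | h
      · subst h
        simp only [if_pos rfl] at hp
        rw [hT]; omega
      · simp only [if_neg h] at hp
        rw [hT]; omega
    have hfiltercard : ∀ v : V,
        (T.toFinset.filter (fun e => v ∈ e)).card = T.countP (fun e => decide (v ∈ e)) :=
      fun v => countP_toFinset _ _ hnodup
    have heven' : ∀ v : V, (E'.filter (fun e => v ∈ e)).card % 2 = 0 := by
      intro v
      have hsplit : E'.filter (fun e => v ∈ e)
          = E.filter (fun e => v ∈ e) \ T.toFinset.filter (fun e => v ∈ e) := by
        ext e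
        simp only [hE', Finset.mem_filter, Finset.mem_sdiff]
        tauto
      have hsub3 : T.toFinset.filter (fun e => v ∈ e) ⊆ E.filter (fun e => v ∈ e) :=
        Finset.filter_subset_filter _ hTF_sub
      rw [hsplit, Finset.card_sdiff_of_subset hsub3, hfiltercard v]
      have h1 := heven v
      have h2 := hcountP_even v
      have h3 := Finset.card_le_card hsub3
      rw [hfiltercard v] at h3
      omega
    obtain ⟨A', ho1, ho2, ho3, ho4⟩ := IH E' hss hnd' heven'
    have hALmem : ∀ p ∈ AL, s(p.1, p.2) ∈ T := by
      intro p hp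
      rw [hT]
      exact List.mem_map_of_mem hp
    have hdisj : Disjoint A' AL.toFinset := by
      rw [Finset.disjoint_left]
      intro p hp hp2
      have h1 := ho1 p hp
      have h2 := hALmem p (List.mem_toFinset.1 hp2)
      rw [hE'] at h1
      exact (Finset.mem_sdiff.1 h1).2 (List.mem_toFinset.2 h2)
    refine ⟨A' ∪ AL.toFinset, ?_, ?_, ?_, ?_⟩
    · intro p hp
      rcases Finset.mem_union.1 hp with h | h
      · exact Finset.sdiff_subset (ho1 p h)
      · exact hTF_sub (List.mem_toFinset.2 (hALmem p (List.mem_toFinset.1 h)))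
    · intro e he
      by_cases h : e ∈ T.toFinset
      · obtain ⟨p, hp, hpe⟩ := List.mem_map.1 (List.mem_toFinset.1 h)
        exact ⟨p, Finset.mem_union_right _ (List.mem_toFinset.2 hp), hpe⟩
      · obtain ⟨p, hp, hpe⟩ := ho2 e (Finset.mem_sdiff.2 ⟨he, h⟩)
        exact ⟨p, Finset.mem_union_left _ hp, hpe⟩
    · rw [Finset.card_union_of_disjoint hdisj, ho3,
        List.toFinset_card_of_nodup hALnodup, hE',
        Finset.card_sdiff_of_subset hTF_sub, List.toFinset_card_of_nodup hnodup]
      have : T.length ≤ E.card := by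
        rw [← List.toFinset_card_of_nodup hnodup]
        exact Finset.card_le_card hTF_sub
      omega
    · intro v
      rw [Finset.filter_union, Finset.filter_union,
        Finset.card_union_of_disjoint (Finset.disjoint_filter_filter hdisj),
        Finset.card_union_of_disjoint (Finset.disjoint_filter_filter hdisj), ho4 v]
      congr 1
      have hfst : (AL.toFinset.filter (fun p => p.1 = v)).card
          = ((a :: l).dropLast).countP (fun x => decide (x = v)) := by
        rw [countP_toFinset _ _ hALnodup, ← map_fst_arcs l a, List.countP_map]
        rfl
      have hsnd : (AL.toFinset.filter (fun p => p.2 = v)).card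
          = l.countP (fun x => decide (x = v)) := by
        rw [countP_toFinset _ _ hALnodup, ← map_snd_arcs l a, List.countP_map]
        rfl
      rw [hfst, hsnd, countP_dropLast_eq v a l hlne hcl]

variable [Fintype V]

lemma exists_two_sum_labeling (G : SimpleGraph V) [DecidableRel G.Adj] (r : ℕ)
    (hdeg : ∀ v : V, G.degree v = r) (h4 : r % 4 = 0) (hr : 0 < r) :
    ∃ ℓ : Sym2 V → ZMod 4, (∀ e ∈ G.edgeSet, ℓ e ≠ 0) ∧
      ∀ v : V, ∑ u ∈ Finset.univ.filter (fun u => G.Adj v u), ℓ s(v, u) = 2 := by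
  classical
  set E := G.edgeFinset with hE
  have hnd : ∀ e ∈ E, ¬ e.IsDiag := fun e he => SimpleGraph.not_isDiag_of_mem_edgeFinset he
  have hdegE : ∀ v : V, (E.filter (fun e => v ∈ e)).card = r := by
    intro v
    rw [← SimpleGraph.incidenceFinset_eq_filter, SimpleGraph.card_incidenceFinset_eq_degree,
      hdeg v]
  have heven : ∀ v : V, (E.filter (fun e => v ∈ e)).card % 2 = 0 := by
    intro v; rw [hdegE v]; omega
  obtain ⟨A, ho1, ho2, ho3, ho4⟩ := exists_orientation E hnd heven
  -- the map from arcs to edges is injective on A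
  have himage : A.image (fun p => s(p.1, p.2)) = E := by
    apply Finset.Subset.antisymm
    · intro e he
      obtain ⟨p, hp, hpe⟩ := Finset.mem_image.1 he
      exact hpe ▸ ho1 p hp
    · intro e he
      obtain ⟨p, hp, hpe⟩ := ho2 e he
      exact Finset.mem_image.2 ⟨p, hp, hpe⟩
  have hinj : Set.InjOn (fun p : V × V => s(p.1, p.2)) ↑A := by
    rw [← Finset.card_image_iff, himage, ho3]
  have hnodiag : ∀ p ∈ A, p.1 ≠ p.2 := by
    intro p hp h
    have := hnd _ (ho1 p hp)
    rw [Sym2.mk_isDiag_iff] at this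
    exact this h
  -- out-degree is r / 2 at every vertex
  have houtdeg : ∀ v : V, (A.filter (fun p => p.1 = v)).card = r / 2 := by
    intro v
    have hsplit : A.filter (fun p => p.1 = v ∨ p.2 = v)
        = A.filter (fun p => p.1 = v) ∪ A.filter (fun p => p.2 = v) :=
      Finset.filter_or _ _ _
    have hdisj2 : Disjoint (A.filter (fun p => p.1 = v)) (A.filter (fun p => p.2 = v)) := by
      rw [Finset.disjoint_left]
      intro p hp1 hp2
      have h1 := (Finset.mem_filter.1 hp1).2
      have h2 := (Finset.mem_filter.1 hp2).2
      exact hnodiag p (Finset.mem_filter.1 hp1).1 (h1.trans h2.symm)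
    have hbij : (A.filter (fun p => p.1 = v ∨ p.2 = v)).card
        = (E.filter (fun e => v ∈ e)).card := by
      apply Finset.card_bij (fun p _ => s(p.1, p.2))
      · intro p hp
        have := Finset.mem_filter.1 hp
        exact Finset.mem_filter.2 ⟨ho1 p this.1, by
          rcases this.2 with h | h <;> simp [h, Sym2.mem_iff]⟩
      · intro p hp q hq hpq
        exact hinj (Finset.mem_coe.2 (Finset.filter_subset _ _ hp))
          (Finset.mem_coe.2 (Finset.filter_subset _ _ hq)) hpq
      · intro e he
        have he' := Finset.mem_filter.1 he
        obtain ⟨p, hp, hpe⟩ := ho2 e he'.1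
        refine ⟨p, Finset.mem_filter.2 ⟨hp, ?_⟩, hpe⟩
        have : v ∈ s(p.1, p.2) := hpe ▸ he'.2
        rw [Sym2.mem_iff] at this
        exact this.imp Eq.symm Eq.symm
    rw [hsplit, Finset.card_union_of_disjoint hdisj2] at hbij
    rw [hdegE v, ← ho4 v] at hbij
    omega
  -- Hall's condition for the out-neighbour sets
  set t : V → Finset V := fun v => (A.filter (fun p => p.1 = v)).image Prod.snd with ht
  have hsnd_inj : ∀ v : V, Set.InjOn (Prod.snd : V × V → V) ↑(A.filter (fun p => p.1 = v)) := by
    intro v p hp q hq hpq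
    have h1 := (Finset.mem_filter.1 hp).2
    have h2 := (Finset.mem_filter.1 hq).2
    exact Prod.ext (h1.trans h2.symm) hpq
  have htcard : ∀ v : V, (t v).card = r / 2 := by
    intro v
    rw [ht, Finset.card_image_of_injOn (hsnd_inj v), houtdeg v]
  have hhall : ∀ s : Finset V, s.card ≤ (s.biUnion t).card := by
    intro s
    set N := s.biUnion t with hN
    have hfromcard : (A.filter (fun p => p.1 ∈ s)).card = s.card * (r / 2) := by
      have : A.filter (fun p => p.1 ∈ s) = s.biUnion (fun v => A.filter (fun p => p.1 = v)) := by
        ext p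
        simp only [Finset.mem_filter, Finset.mem_biUnion]
        constructor
        · rintro ⟨hp, hps⟩; exact ⟨p.1, hps, hp, rfl⟩
        · rintro ⟨v, hv, hp, rfl⟩; exact ⟨hp, hv⟩
      rw [this, Finset.card_biUnion, Finset.sum_congr rfl (fun v _ => houtdeg v),
        Finset.sum_const, smul_eq_mul]
      intro x _ y _ hxy
      rw [Function.onFun, Finset.disjoint_left]
      intro p hp1 hp2
      exact hxy ((Finset.mem_filter.1 hp1).2.symm.trans (Finset.mem_filter.1 hp2).2)
    have hintocard : (A.filter (fun p => p.2 ∈ N)).card = N.card * (r / 2) := by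
      have : A.filter (fun p => p.2 ∈ N) = N.biUnion (fun v => A.filter (fun p => p.2 = v)) := by
        ext p
        simp only [Finset.mem_filter, Finset.mem_biUnion]
        constructor
        · rintro ⟨hp, hps⟩; exact ⟨p.2, hps, hp, rfl⟩
        · rintro ⟨v, hv, hp, rfl⟩; exact ⟨hp, hv⟩
      rw [this, Finset.card_biUnion, Finset.sum_congr rfl (fun v _ => (ho4 v).symm.trans (houtdeg v)),
        Finset.sum_const, smul_eq_mul]
      intro x _ y _ hxy
      rw [Function.onFun, Finset.disjoint_left]
      intro p hp1 hp2
      exact hxy ((Finset.mem_filter.1 hp1).2.symm.trans (Finset.mem_filter.1 hp2).2)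
    have hsubA : A.filter (fun p => p.1 ∈ s) ⊆ A.filter (fun p => p.2 ∈ N) := by
      intro p hp
      have := Finset.mem_filter.1 hp
      refine Finset.mem_filter.2 ⟨this.1, ?_⟩
      rw [hN]
      refine Finset.mem_biUnion.2 ⟨p.1, this.2, ?_⟩
      rw [ht]
      exact Finset.mem_image.2 ⟨p, Finset.mem_filter.2 ⟨this.1, rfl⟩, rfl⟩
    have hmul : s.card * (r / 2) ≤ N.card * (r / 2) := by
      rw [← hfromcard, ← hintocard]
      exact Finset.card_le_card hsubA
    exact Nat.le_of_mul_le_mul_right hmul (by omega)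
  obtain ⟨f, hfinj, hft⟩ := (Finset.all_card_le_biUnion_card_iff_exists_injective t).1 hhall
  have hfA : ∀ v : V, (v, f v) ∈ A := by
    intro v
    have := hft v
    rw [ht] at this
    obtain ⟨p, hp, hpe⟩ := Finset.mem_image.1 this
    have h1 := (Finset.mem_filter.1 hp).2
    have : p = (v, f v) := Prod.ext h1 hpe
    exact this ▸ (Finset.mem_filter.1 hp).1
  obtain ⟨g, hgf, hfg⟩ := Function.bijective_iff_has_inverse.1
    (Finite.injective_iff_bijective.1 hfinj)
  have hgA : ∀ v : V, (g v, v) ∈ A := by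
    intro v
    have := hfA (g v)
    rwa [hfg v] at this
  have hfgne : ∀ v : V, f v ≠ g v := by
    intro v h
    have h1 : (v, f v) ∈ A := hfA v
    have h2 : (f v, v) ∈ A := h ▸ hgA v
    have hne : v ≠ f v := hnodiag _ h1
    have : (v, f v) = (f v, v) := by
      apply hinj (Finset.mem_coe.2 h1) (Finset.mem_coe.2 h2)
      simp [Sym2.eq_swap]
    exact hne (congrArg Prod.fst this)
  -- the 2-factor edges
  set M : Finset (Sym2 V) := Finset.univ.image (fun v => s(v, f v)) with hM
  refine ⟨fun e => if e ∈ M then 2 else 1, ?_, ?_⟩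
  · intro e _
    by_cases h : e ∈ M <;> simp [h] <;> decide
  · intro v
    have hsum : ∀ u : V, (if s(v, u) ∈ M then (2 : ZMod 4) else 1)
        = 1 + (if s(v, u) ∈ M then (1 : ZMod 4) else 0) := by
      intro u
      by_cases h : s(v, u) ∈ M <;> simp [h] <;> decide
    rw [Finset.sum_congr rfl (fun u _ => hsum u), Finset.sum_add_distrib,
      Finset.sum_const, Finset.sum_boole]
    have hcardnb : (Finset.univ.filter (fun u => G.Adj v u)).card = r := by
      rw [← SimpleGraph.neighborFinset_eq_filter, ← SimpleGraph.degree, hdeg v]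
    have hfilter : (Finset.univ.filter (fun u => G.Adj v u)).filter (fun u => s(v, u) ∈ M)
        = {f v, g v} := by
      ext u
      simp only [Finset.mem_filter, Finset.mem_univ, true_and, Finset.mem_insert,
        Finset.mem_singleton]
      constructor
      · rintro ⟨hadj, hmem⟩
        obtain ⟨x, _, hx⟩ := Finset.mem_image.1 hmem
        rcases Sym2.eq_iff.1 hx with ⟨h1, h2⟩ | ⟨h1, h2⟩
        · left; rw [← h2, h1]
        · right
          rw [← h2, ← h1, hgf x]
      · rintro (rfl | rfl)
        · constructor
          · have := ho1 _ (hfA v)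
            rw [hE, SimpleGraph.mem_edgeFinset] at this
            exact this
          · exact Finset.mem_image.2 ⟨v, Finset.mem_univ v, rfl⟩
        · constructor
          · have := ho1 _ (hgA v)
            rw [hE, SimpleGraph.mem_edgeFinset] at this
            exact (G.adj_symm this)
          · rw [Sym2.eq_swap]
            refine Finset.mem_image.2 ⟨g v, Finset.mem_univ _, ?_⟩
            rw [hfg v]
      
    rw [hfilter]
    have hpair : ({f v, g v} : Finset V).card = 2 := by
      rw [Finset.card_insert_of_notMem (by simp [hfgne v]), Finset.card_singleton]
    rw [hpair, hcardnb]
    obtain ⟨k, hk⟩ : ∃ k, r = 4 * k := ⟨r / 4, by omega⟩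
    subst hk
    simp only [nsmul_eq_mul, mul_one]
    have hz : ((4 * k : ℕ) : ZMod 4) = 0 := by
      push_cast
      have h40 : (4 : ZMod 4) = 0 := by decide
      rw [h40]
      ring
    rw [hz, zero_add]
    norm_num

lemma spectrum_even (G : SimpleGraph V) [DecidableRel G.Adj] {c : ZMod 4}
    (ℓ : Sym2 V → ZMod 4)
    (hsum : ∀ v : V, ∑ u ∈ Finset.univ.filter (fun u => G.Adj v u), ℓ s(v, u) = c)
    (hodd : Odd (Fintype.card V)) : c = 0 ∨ c = 2 := by
  classical
  set φ : ZMod 4 →+* ZMod 2 := ZMod.castHom (show (2:ℕ) ∣ 4 by norm_num) (ZMod 2) with hφ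
  have hx2 : ∀ x : ZMod 2, x + x = 0 := by decide
  have key : ∑ p ∈ Finset.univ.filter (fun p : V × V => G.Adj p.1 p.2),
      φ (ℓ s(p.1, p.2)) = 0 := by
    apply Finset.sum_involution (fun p _ => Prod.swap p)
    · intro p hp
      have hs : s(p.2, p.1) = s(p.1, p.2) := Sym2.eq_swap
      show φ (ℓ s(p.1, p.2)) + φ (ℓ s(p.2, p.1)) = 0
      rw [hs]
      exact hx2 _
    · intro p hp _
      have hadj : G.Adj p.1 p.2 := (Finset.mem_filter.1 hp).2
      intro h
      exact G.ne_of_adj hadj (congrArg Prod.fst h).symm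
    · intro p hp
      refine Finset.mem_filter.2 ⟨Finset.mem_univ _, ?_⟩
      exact G.adj_symm (Finset.mem_filter.1 hp).2
    · intro p hp
      rfl
  have h1 : ∑ v : V, ∑ u ∈ Finset.univ.filter (fun u => G.Adj v u), φ (ℓ s(v, u)) = 0 := by
    calc ∑ v : V, ∑ u ∈ Finset.univ.filter (fun u => G.Adj v u), φ (ℓ s(v, u))
        = ∑ v : V, ∑ u : V, if G.Adj v u then φ (ℓ s(v, u)) else 0 := by
          refine Finset.sum_congr rfl (fun v _ => ?_)
          rw [Finset.sum_filter]
      _ = ∑ p : V × V, if G.Adj p.1 p.2 then φ (ℓ s(p.1, p.2)) else 0 := by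
          rw [Fintype.sum_prod_type]
      _ = ∑ p ∈ Finset.univ.filter (fun p : V × V => G.Adj p.1 p.2),
            φ (ℓ s(p.1, p.2)) := by rw [Finset.sum_filter]
      _ = 0 := key
  have h2 : ∑ v : V, ∑ u ∈ Finset.univ.filter (fun u => G.Adj v u), φ (ℓ s(v, u))
      = (Fintype.card V : ZMod 2) * φ c := by
    have : ∀ v : V, ∑ u ∈ Finset.univ.filter (fun u => G.Adj v u), φ (ℓ s(v, u)) = φ c := by
      intro v
      rw [← map_sum, hsum v]
    rw [Finset.sum_congr rfl (fun v _ => this v), Finset.sum_const, Finset.card_univ,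
      nsmul_eq_mul]
  obtain ⟨m, hm⟩ := hodd
  have hcast : (Fintype.card V : ZMod 2) = 1 := by
    rw [hm]
    push_cast
    have : (2 : ZMod 2) = 0 := by decide
    rw [this]
    ring
  rw [h2, hcast, one_mul] at h1
  have : ∀ x : ZMod 4, φ x = 0 → x = 0 ∨ x = 2 := by decide
  exact this c h1

lemma r_even_of_odd_card (G : SimpleGraph V) [DecidableRel G.Adj] (r : ℕ)
    (hdeg : ∀ v : V, G.degree v = r) (hodd : Odd (Fintype.card V)) : r % 2 = 0 := by
  have h := SimpleGraph.sum_degrees_eq_twice_card_edges G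
  rw [Finset.sum_congr rfl (fun v _ => hdeg v), Finset.sum_const, Finset.card_univ,
    smul_eq_mul] at h
  have heven : Even (Fintype.card V * r) := ⟨G.edgeFinset.card, by omega⟩
  rcases Nat.even_mul.1 heven with h' | h'
  · exact absurd h' (by simpa [Nat.even_iff, Nat.odd_iff] using hodd)
  · exact Nat.even_iff.1 h'

end ZSM

/-- A zero-sum `4`-magic `r`-regular graph (`r ≥ 3`) of odd order has sum spectrum `{0, 2}`. -/
theorem zero_sum_four_magic_odd_order {V : Type*} [Fintype V] (G : SimpleGraph V)
    (r : ℕ) (hr : 3 ≤ r) (hreg : IsRegularDeg G r) (hzero : IsSumMagic G 4 0)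
    (hodd : Odd (Fintype.card V)) :
    sumSpectrum G 4 = {0, 2} := by
  classical
  have hVsum : ∀ (ℓ : Sym2 V → ZMod 4) (v : V),
      vertexLabelSum G ℓ v = ∑ u ∈ Finset.univ.filter (fun u => G.Adj v u), ℓ s(v, u) := by
    intro ℓ v
    unfold vertexLabelSum
    congr 1
  have hcardnb : ∀ v : V, (Finset.univ.filter (fun u => G.Adj v u)).card = r := by
    intro v
    rw [← hreg v]
    unfold degreeOf
    congr 1
  have hdeg : ∀ v : V, G.degree v = r := by
    intro v
    rw [← hcardnb v, ← SimpleGraph.neighborFinset_eq_filter]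
    rfl
  have hreven : r % 2 = 0 := ZSM.r_even_of_odd_card G r hdeg hodd
  apply Set.eq_of_subset_of_subset
  · intro c hc
    obtain ⟨ℓ, hnz, hsum⟩ := hc
    have hsum' : ∀ v : V, ∑ u ∈ Finset.univ.filter (fun u => G.Adj v u), ℓ s(v, u) = c :=
      fun v => (hVsum ℓ v).symm.trans (hsum v)
    rcases ZSM.spectrum_even G ℓ hsum' hodd with h | h <;> simp [h]
  · intro c hc
    simp only [Set.mem_insert_iff, Set.mem_singleton_iff] at hc
    rcases hc with rfl | rfl
    · exact hzero
    · have h4 : r % 4 = 0 ∨ r % 4 = 2 := by omega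
      rcases h4 with h4 | h4
      · obtain ⟨ℓ, hnz, hsum⟩ := ZSM.exists_two_sum_labeling G r hdeg h4 (by omega)
        exact ⟨ℓ, hnz, fun v => (hVsum ℓ v).trans (hsum v)⟩
      · have h10 : (1 : ZMod 4) ≠ 0 := by decide
        refine ⟨fun _ => 1, fun _ _ => h10, fun v => ?_⟩
        rw [hVsum, Finset.sum_const, hcardnb v]
        obtain ⟨m, hm⟩ : ∃ m, r = 4 * m + 2 := ⟨r / 4, by omega⟩
        subst hm
        simp only [nsmul_eq_mul, mul_one]
        push_cast
        have h40 : (4 : ZMod 4) = 0 := by decide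
        rw [h40]
        ring
end

section
/- Let G be an r-regular finite simple graph, where r ≥ 3, r ≡ 0 (mod 3), and r is odd. Then G is completely 3-magic if and only if G has a spanning subgraph H such that the degree of every vertex v in H satisfies deg_H(v) ≡ 1 (mod 3). -/
open Classical in
lemma sum_split {V : Type*} [Fintype V] (G : SimpleGraph V) (ℓ : Sym2 V → ZMod 3)
    (v : V) (p : V → Prop) (a b : ZMod 3)
    (h1 : ∀ u, G.Adj v u → p u → ℓ s(v,u) = a)
    (h2 : ∀ u, G.Adj v u → ¬ p u → ℓ s(v,u) = b) :
    vertexLabelSum G ℓ v =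
      ((Finset.univ.filter (fun u => G.Adj v u ∧ p u)).card : ZMod 3) * a
      + ((Finset.univ.filter (fun u => G.Adj v u ∧ ¬ p u)).card : ZMod 3) * b := by
  classical
  unfold vertexLabelSum
  rw [← Finset.sum_filter_add_sum_filter_not (Finset.univ.filter (fun u => G.Adj v u)) p]
  rw [Finset.filter_filter, Finset.filter_filter]
  congr 1
  · rw [Finset.sum_congr rfl (fun u hu => by
      simp only [Finset.mem_filter] at hu; exact h1 u hu.2.1 hu.2.2)]
    simp [mul_comm]
  · rw [Finset.sum_congr rfl (fun u hu => by
      simp only [Finset.mem_filter] at hu; exact h2 u hu.2.1 hu.2.2)]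
    simp [mul_comm]

open Classical in
lemma card_split {V : Type*} [Fintype V] (G : SimpleGraph V) (v : V) (p : V → Prop) :
    (Finset.univ.filter (fun u => G.Adj v u ∧ p u)).card
      + (Finset.univ.filter (fun u => G.Adj v u ∧ ¬ p u)).card = degreeOf G v := by
  classical
  unfold degreeOf
  rw [← Finset.filter_filter, ← Finset.filter_filter]
  exact Finset.card_filter_add_card_filter_not p

lemma magic_of {V : Type*} [Fintype V] (G H : SimpleGraph V) (r : ℕ) (hdvd : r % 3 = 0)
    (hreg : IsRegularDeg G r) (hle : H ≤ G) (hdeg : ∀ v, degreeOf H v % 3 = 1)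
    (a b : ZMod 3) (ha : a ≠ 0) (hb : b ≠ 0) : IsSumMagic G 3 (a + 2*b) := by
  classical
  refine ⟨fun e => if e ∈ H.edgeSet then a else b, ?_, ?_⟩
  · intro e _
    dsimp only
    split <;> assumption
  · intro v
    rw [sum_split G _ v (fun u => H.Adj v u) a b
      (fun u _ h => by simp [SimpleGraph.mem_edgeSet, h])
      (fun u _ h => by simp [SimpleGraph.mem_edgeSet, h])]
    have hfA : (Finset.univ.filter (fun u => G.Adj v u ∧ H.Adj v u))
        = Finset.univ.filter (fun u => H.Adj v u) :=
      Finset.filter_congr (fun u _ => ⟨fun h => h.2, fun h => ⟨hle h, h⟩⟩)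
    have hA : ((Finset.univ.filter (fun u => G.Adj v u ∧ H.Adj v u)).card : ZMod 3) = 1 := by
      rw [hfA]
      show ((degreeOf H v : ℕ) : ZMod 3) = 1
      rw [← ZMod.natCast_mod, hdeg v, Nat.cast_one]
    have hcard := card_split G v (fun u => H.Adj v u)
    have hr : (((Finset.univ.filter (fun u => G.Adj v u ∧ H.Adj v u)).card : ZMod 3)
        + ((Finset.univ.filter (fun u => G.Adj v u ∧ ¬ H.Adj v u)).card : ZMod 3))
        = ((r : ℕ) : ZMod 3) := by
      rw [← Nat.cast_add, hcard, hreg v]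
    have hr0 : ((r : ℕ) : ZMod 3) = 0 := by
      rw [← ZMod.natCast_mod, hdvd, Nat.cast_zero]
    rw [hA] at hr ⊢
    rw [hr0] at hr
    have hB : ((Finset.univ.filter (fun u => G.Adj v u ∧ ¬ H.Adj v u)).card : ZMod 3) = 2 := by
      rw [eq_neg_of_add_eq_zero_right hr]; decide
    rw [hB]; ring

open Classical in
lemma split_ex {V : Type*} [Fintype V] (G : SimpleGraph V) (ℓ : Sym2 V → ZMod 3)
    (v : V) (p : V → Prop) (a b : ZMod 3)
    (h1 : ∀ u, G.Adj v u → p u → ℓ s(v,u) = a)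
    (h2 : ∀ u, G.Adj v u → ¬ p u → ℓ s(v,u) = b) :
    ∃ A B : ℕ, A + B = degreeOf G v ∧
      vertexLabelSum G ℓ v = (A : ZMod 3) * a + (B : ZMod 3) * b ∧
      (Finset.univ.filter (fun u => G.Adj v u ∧ p u)).card = A :=
  ⟨_, _, card_split G v p, sum_split G ℓ v p a b h1 h2, rfl⟩

open Classical in
lemma forward_dir {V : Type*} [Fintype V] (G : SimpleGraph V) (r : ℕ) (hdvd : r % 3 = 0)
    (hreg : IsRegularDeg G r) (hcm : CompletelyMagic G 3) :
    ∃ H : SimpleGraph V, H ≤ G ∧ ∀ v : V, degreeOf H v % 3 = 1 := by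
  classical
  obtain ⟨ℓ, hne, hsum⟩ := hcm 2
  refine ⟨⟨fun x y => G.Adj x y ∧ ℓ s(x,y) = 1,
    ⟨fun x y h => ⟨h.1.symm, by rw [Sym2.eq_swap]; exact h.2⟩⟩,
    ⟨fun x h => G.loopless.irrefl x h.1⟩⟩, fun x y h => h.1, fun v => ?_⟩
  have h3 : ∀ x : ZMod 3, x ≠ 0 → x ≠ 1 → x = 2 := by decide
  obtain ⟨A, B, hAB, hs, hAfil⟩ := split_ex G ℓ v (fun u => ℓ s(v,u) = 1) 1 2
    (fun u _ h => h)
    (fun u hu h => h3 _ (hne _ (G.mem_edgeSet.mpr hu)) h)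
  rw [hsum v] at hs
  rw [hreg v] at hAB
  have hrz : ((r : ℕ) : ZMod 3) = 0 := by
    rw [← ZMod.natCast_mod, hdvd, Nat.cast_zero]
  have hr0 : (A : ZMod 3) + (B : ZMod 3) = 0 := by
    rw [← Nat.cast_add, hAB, hrz]
  have hz : ((3:ZMod 3)) = 0 := by decide
  have hA1 : (A : ZMod 3) = 1 := by
    linear_combination hs + 2*hr0 - hz
  have hdeg : degreeOf (⟨fun x y => G.Adj x y ∧ ℓ s(x,y) = 1,
      ⟨fun x y h => ⟨h.1.symm, by rw [Sym2.eq_swap]; exact h.2⟩⟩,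
      ⟨fun x h => G.loopless.irrefl x h.1⟩⟩ : SimpleGraph V) v = A := by
    rw [← hAfil]
    unfold degreeOf
    congr 1
    ext u
    simp only [Finset.mem_filter, Finset.mem_univ, true_and]
  rw [hdeg]
  have hm : ((A % 3 : ℕ) : ZMod 3) = 1 := by rw [ZMod.natCast_mod]; exact hA1
  have hlt : A % 3 < 3 := Nat.mod_lt _ (by norm_num)
  have hv := ZMod.val_cast_of_lt hlt
  rw [hm] at hv
  exact hv.symm.trans (by decide)


/-- For `r ≥ 3` odd with `3 ∣ r`, an `r`-regular graph is completely `3`-magic iff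
it has a spanning subgraph all of whose degrees are `≡ 1 (mod 3)`. -/
theorem completely_three_magic_iff_factor {V : Type*} [Fintype V] (G : SimpleGraph V)
    (r : ℕ) (hr : 3 ≤ r) (hdvd : r % 3 = 0) (hodd : Odd r)
    (hreg : IsRegularDeg G r) :
    CompletelyMagic G 3 ↔
      ∃ H : SimpleGraph V, H ≤ G ∧ ∀ v : V, degreeOf H v % 3 = 1 := by
  constructor
  · exact forward_dir G r hdvd hreg
  · rintro ⟨H, hle, hdeg⟩ c
    have hall : ∀ x : ZMod 3, x = 0 ∨ x = 1 ∨ x = 2 := by decide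
    rcases hall c with h | h | h <;> subst h
    · have := magic_of G H r hdvd hreg hle hdeg 1 1 (by decide) (by decide)
      convert this using 1; decide
    · have := magic_of G H r hdvd hreg hle hdeg 2 1 (by decide) (by decide)
      convert this using 1; decide
    · have := magic_of G H r hdvd hreg hle hdeg 1 2 (by decide) (by decide)
      convert this using 1; decide
end

section
/- Let n ≥ 3 and k ≥ 3 be integers with n even, and let C_n be the cycle graph on n vertices. Then C_n is completely k-magic. -/
/-- The cycle `C_n` with `n ≥ 3` even is completely `k`-magic for every `k ≥ 3`. -/
theorem even_cycle_completely_magic (n k : ℕ) (hn : 3 ≤ n) (hneven : Even n)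
    (hk : 3 ≤ k) :
    CompletelyMagic (SimpleGraph.cycleGraph n) k := by
  obtain ⟨m, rfl⟩ : ∃ m, n = m + 4 := by
    rcases hneven with ⟨t, ht⟩
    exact ⟨n - 4, by omega⟩
  haveI : NeZero k := ⟨by omega⟩
  intro c
  -- choose a nonzero label `a` with `a ≠ c`
  have hcard : 3 ≤ Fintype.card (ZMod k) := by
    rw [ZMod.card]; exact hk
  obtain ⟨a, ha0, hac⟩ : ∃ a : ZMod k, a ≠ 0 ∧ a ≠ c := by
    by_contra hcon
    push_neg at hcon
    have hsub : (Finset.univ : Finset (ZMod k)) ⊆ {0, c} := by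
      intro x _
      rcases eq_or_ne x 0 with h0 | h0
      · simp [h0]
      · simp [hcon x h0]
    have h1 := Finset.card_le_card hsub
    have h2 : ({0, c} : Finset (ZMod k)).card ≤ 2 :=
      (Finset.card_insert_le _ _).trans (by simp)
    rw [Finset.card_univ] at h1
    omega
  set b := c - a with hbdef
  have hb0 : b ≠ 0 := sub_ne_zero.mpr (Ne.symm hac)
  have h2ne : (2 : Fin (m + 4)) ≠ 0 := by
    intro h
    have := congrArg Fin.val h
    simp [Fin.val_two] at this
    rw [Nat.mod_eq_of_lt (by omega)] at this; omega
  have hboth : ∀ u v : Fin (m + 4), u + 1 = v → v + 1 = u → False := by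
    intro u v h1 h2
    apply h2ne
    have h3 : u + 1 + 1 = u := by rw [h1, h2]
    rw [add_assoc, show (1 : Fin (m + 4)) + 1 = 2 from by rfl, add_eq_left] at h3
    exact h3
  set h : Fin (m + 4) → ZMod k := fun x => if x.val % 2 = 0 then a else b with hhdef
  have hhne : ∀ x, h x ≠ 0 := by
    intro x
    simp only [hhdef]
    split <;> assumption
  have hdvd : 2 ∣ (m + 4) := hneven.two_dvd
  have hval : ∀ u : Fin (m + 4), (u + 1).val % 2 = (u.val + 1) % 2 := by
    intro u
    have : (u + 1).val = (u.val + 1) % (m + 4) := by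
      rw [Fin.val_add]
      congr 1
    rw [this, Nat.mod_mod_of_dvd _ hdvd]
  have hpair : ∀ u : Fin (m + 4), h u + h (u + 1) = c := by
    intro u
    have hv := hval u
    by_cases hp : u.val % 2 = 0
    · have hp1 : (u + 1).val % 2 ≠ 0 := by omega
      simp only [hhdef, if_pos hp, if_neg hp1, hbdef]
      ring
    · have hp1 : (u + 1).val % 2 = 0 := by omega
      simp only [hhdef, if_neg hp, if_pos hp1, hbdef]
      ring
  refine ⟨Sym2.lift ⟨fun u v => if u + 1 = v then h u else if v + 1 = u then h v else a, ?_⟩, ?_, ?_⟩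
  · intro u v
    by_cases h1 : u + 1 = v <;> by_cases h2 : v + 1 = u
    · exact absurd h2 (fun hh => hboth u v h1 hh)
    · simp [h1, h2]
    · simp [h1, h2]
    · simp [h1, h2]
  · -- nonzero on edges
    intro e he
    induction e using Sym2.ind with
    | _ u v =>
      rw [SimpleGraph.mem_edgeSet] at he
      rw [SimpleGraph.cycleGraph_adj] at he
      simp only [Sym2.lift_mk]
      rcases he with h1 | h1
      · -- u - v = 1, so v + 1 = u
        have h2 : v + 1 = u := by
          rw [sub_eq_iff_eq_add] at h1
          rw [h1]; exact add_comm v 1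
        have h3 : ¬ u + 1 = v := fun hh => hboth v u h2 hh
        rw [if_neg h3, if_pos h2]
        exact hhne v
      · have h2 : u + 1 = v := by
          rw [sub_eq_iff_eq_add] at h1
          rw [h1]; exact add_comm u 1
        rw [if_pos h2]
        exact hhne u
  · -- vertex sums
    intro v
    unfold vertexLabelSum
    have hfe : (Finset.univ.filter fun u => (SimpleGraph.cycleGraph (m + 4)).Adj v u)
        = (SimpleGraph.cycleGraph (m + 4)).neighborFinset v := by
      ext u
      simp [SimpleGraph.mem_neighborFinset]
    rw [Finset.filter_congr_decidable, hfe, SimpleGraph.cycleGraph_neighborFinset]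
    have hne : v - 1 ≠ v + 1 := by
      intro hh
      apply h2ne
      rw [sub_eq_iff_eq_add] at hh
      rw [add_assoc, show (1 : Fin (m + 4)) + 1 = 2 from by rfl] at hh
      exact (left_eq_add.mp hh)
    rw [Finset.sum_pair hne]
    simp only [Sym2.lift_mk]
    have hs1 : ¬ v + 1 = v - 1 := fun hh => hne hh.symm
    have hs2 : (v - 1) + 1 = v := sub_add_cancel v 1
    rw [if_neg hs1, if_pos hs2]
    simp only [if_true]
    have := hpair (v - 1)
    rw [hs2] at this
    exact this
end

section
/- Let n ≥ 3 and k ≥ 3 be integers with n odd, and let C_n be the cycle graph on n vertices. Then Σ_k(C_n) = ℤ_k \ {0} if k is odd, and Σ_k(C_n) = {0, 2, 4, …, k−2} (the set of c ∈ ℤ_k with c = 2m for some m ∈ ℤ_k) if k is even; in particular, C_n is not completely k-magic. -/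
open SimpleGraph Finset Fin.NatCast Fin.CommRing in
private lemma two_ne_zero_fin (m : ℕ) : ((2:ℕ) : Fin (m+3)) ≠ 0 := by
  intro h2
  rw [Fin.ext_iff, Fin.val_natCast] at h2
  simp [Nat.mod_eq_of_lt (show 2 < m+3 by omega)] at h2

open SimpleGraph Finset Fin.NatCast Fin.CommRing in
private lemma cycle_vsum {m k : ℕ} (ℓ : Sym2 (Fin (m+3)) → ZMod k) (v : Fin (m+3)) :
    vertexLabelSum (cycleGraph (m+3)) ℓ v = ℓ s(v, v-1) + ℓ s(v, v+1) := by
  have hne : v - 1 ≠ v + 1 := by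
    intro h
    exact two_ne_zero_fin m (by push_cast; linear_combination -h)
  have hfil : (Finset.univ.filter fun u => (cycleGraph (m+3)).Adj v u) = {v-1, v+1} := by
    ext u
    simp only [mem_filter, Finset.mem_univ, true_and, Finset.mem_insert, Finset.mem_singleton]
    have : (cycleGraph (m+1+2)).Adj v u ↔ v - u = 1 ∨ u - v = 1 := cycleGraph_adj
    rw [this]
    constructor
    · rintro (h | h)
      · left; linear_combination -h
      · right; linear_combination h
    · rintro (rfl | rfl)
      · left; ring
      · right; ring
  unfold vertexLabelSum
  rw [Finset.filter_congr_decidable, hfil, Finset.sum_pair hne]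

open SimpleGraph Finset Fin.NatCast Fin.CommRing in
private lemma cycle_magic_iff {m k : ℕ} (hodd : Odd (m+3)) (c : ZMod k) :
    IsSumMagic (cycleGraph (m+3)) k c ↔ ∃ x : ZMod k, x ≠ 0 ∧ 2 * x = c := by
  constructor
  · rintro ⟨ℓ, hne, hsum⟩
    set f : Fin (m+3) → ZMod k := fun i => ℓ s(i, i+1) with hf
    have hadj : ∀ v : Fin (m+3), (cycleGraph (m+3)).Adj v (v+1) := by
      intro v
      have : (cycleGraph (m+1+2)).Adj v (v+1) := by
        rw [cycleGraph_adj]; right; ring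
      exact this
    have hf0 : ∀ v, f v ≠ 0 := fun v => hne _ ((cycleGraph (m+3)).mem_edgeSet.2 (hadj v))
    have hrel : ∀ v : Fin (m+3), f v + f (v+1) = c := by
      intro v
      have h1 := hsum (v+1)
      rw [cycle_vsum] at h1
      calc f v + f (v+1) = ℓ s(v+1, (v+1)-1) + ℓ s(v+1, (v+1)+1) := by
              rw [hf]
              congr 2
              rw [Sym2.eq_swap]
              congr 1
              rw [add_sub_cancel_right]
        _ = c := h1
    have hstep : ∀ v : Fin (m+3), f (v+1) = c - f v :=
      fun v => eq_sub_of_add_eq' (hrel v)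
    have key : ∀ (j : ℕ) (v : Fin (m+3)),
        f (v + (j : Fin (m+3))) = if Even j then f v else c - f v := by
      intro j
      induction j with
      | zero => intro v; simp
      | succ j ih =>
        intro v
        have hcast : v + ((j+1 : ℕ) : Fin (m+3)) = (v + (j : Fin (m+3))) + 1 := by
          push_cast; ring
        rw [hcast, hstep, ih v]
        rcases Nat.even_or_odd j with hj | hj
        · simp [hj, Nat.even_add_one]
        · have hj' : ¬ Even j := Nat.not_even_iff_odd.mpr hj
          simp [hj', Nat.even_add_one, sub_sub_cancel]
    have hmain := key (m+3) 0
    rw [Fin.natCast_self, add_zero, if_neg (Nat.not_even_iff_odd.mpr hodd)] at hmain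
    exact ⟨f 0, hf0 0, by linear_combination hmain⟩
  · rintro ⟨x, hx, hxc⟩
    refine ⟨fun _ => x, fun e _ => hx, fun v => ?_⟩
    rw [cycle_vsum, ← hxc, two_mul]

/-- For odd `n ≥ 3` and `k ≥ 3`, the sum spectrum of `C_n` is the nonzero residues when `k`
is odd and the even residues when `k` is even; in particular `C_n` is not completely
`k`-magic. -/
theorem odd_cycle_spectrum (n k : ℕ) (hn : 3 ≤ n) (hnodd : Odd n) (hk : 3 ≤ k) :
    (Odd k → sumSpectrum (SimpleGraph.cycleGraph n) k = {c : ZMod k | c ≠ 0}) ∧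
    (Even k → sumSpectrum (SimpleGraph.cycleGraph n) k
      = {c : ZMod k | ∃ m : ZMod k, c = 2 * m}) ∧
    ¬ CompletelyMagic (SimpleGraph.cycleGraph n) k := by
  obtain ⟨m, rfl⟩ : ∃ m, n = m + 3 := ⟨n - 3, by omega⟩
  have hiff : ∀ c : ZMod k,
      IsSumMagic (SimpleGraph.cycleGraph (m+3)) k c ↔ ∃ x : ZMod k, x ≠ 0 ∧ 2 * x = c :=
    fun c => cycle_magic_iff hnodd c
  have hOdd : Odd k → sumSpectrum (SimpleGraph.cycleGraph (m+3)) k = {c : ZMod k | c ≠ 0} := by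
    intro hko
    have h2u : IsUnit (2 : ZMod k) := by
      have := (ZMod.isUnit_iff_coprime 2 k).mpr (Nat.coprime_two_left.mpr hko)
      simpa using this
    ext c
    simp only [sumSpectrum, Set.mem_setOf_eq, hiff]
    constructor
    · rintro ⟨x, hx, hxc⟩ hc0
      rw [hc0] at hxc
      exact hx (by
        have := h2u.mul_right_eq_zero.mp hxc
        exact this)
    · intro hc
      obtain ⟨u, hu⟩ := h2u
      refine ⟨(u⁻¹ : (ZMod k)ˣ) * c, ?_, ?_⟩
      · intro h0
        apply hc
        have : (u : ZMod k) * ((u⁻¹ : (ZMod k)ˣ) * c) = 0 := by rw [h0, mul_zero]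
        rwa [← mul_assoc, ← Units.val_mul, mul_inv_cancel, Units.val_one, one_mul] at this
      · rw [← hu, ← mul_assoc, ← Units.val_mul, mul_inv_cancel, Units.val_one, one_mul]
  have hEven : Even k → sumSpectrum (SimpleGraph.cycleGraph (m+3)) k
      = {c : ZMod k | ∃ m : ZMod k, c = 2 * m} := by
    intro hke
    obtain ⟨t, ht⟩ := hke
    ext c
    simp only [sumSpectrum, Set.mem_setOf_eq, hiff]
    constructor
    · rintro ⟨x, _, hxc⟩; exact ⟨x, hxc.symm⟩
    · rintro ⟨m', rfl⟩
      by_cases hm : m' = 0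
      · refine ⟨(t : ZMod k), ?_, ?_⟩
        · rw [Ne, ZMod.natCast_eq_zero_iff]
          intro hdvd
          have := Nat.le_of_dvd (by omega) hdvd
          omega
        · rw [hm, mul_zero, two_mul, ← Nat.cast_add, ← ht, ZMod.natCast_self]
      · exact ⟨m', hm, rfl⟩
  refine ⟨hOdd, hEven, ?_⟩
  intro hCM
  rcases Nat.even_or_odd k with hke | hko
  · have h1 := hCM 1
    rw [show IsSumMagic (SimpleGraph.cycleGraph (m+3)) k 1 ↔ _ from hiff 1] at h1
    obtain ⟨x, _, hx1⟩ := h1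
    have hdvd : (2 : ℕ) ∣ k := hke.two_dvd
    have := congrArg (ZMod.castHom hdvd (ZMod 2)) hx1
    rw [map_mul, map_one, map_ofNat] at this
    have h20 : (2 : ZMod 2) = 0 := by decide
    rw [h20, zero_mul] at this
    exact absurd this (by decide)
  · have h0 := hCM 0
    rw [show IsSumMagic (SimpleGraph.cycleGraph (m+3)) k 0 ↔ _ from hiff 0] at h0
    obtain ⟨x, hx, hx0⟩ := h0
    have h2u : IsUnit (2 : ZMod k) := by
      have := (ZMod.isUnit_iff_coprime 2 k).mpr (Nat.coprime_two_left.mpr hko)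
      simpa using this
    exact hx (h2u.mul_right_eq_zero.mp hx0)
end

section
/- Let k ≥ 4 be an even integer and G a finite simple graph with an odd number of vertices. If c ∈ ℤ_k is a magic sum of G (i.e., G is c-sum k-magic), then c is even, i.e., c = 2m for some m ∈ ℤ_k. In particular, there is no completely k-magic graph of odd order. -/
/-- For even `k ≥ 4`, every magic sum of a graph of odd order is even; in particular
no graph of odd order is completely `k`-magic. -/
theorem odd_order_magic_sum_even {V : Type*} [Fintype V] (G : SimpleGraph V)
    (k : ℕ) (hk : 4 ≤ k) (hkeven : Even k) (hodd : Odd (Fintype.card V)) :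
    (∀ c : ZMod k, IsSumMagic G k c → ∃ m : ZMod k, c = 2 * m) ∧
    ¬ CompletelyMagic G k := by
  classical
  haveI : NeZero k := ⟨by omega⟩
  have h2k : (2 : ℕ) ∣ k := hkeven.two_dvd
  set φ := ZMod.castHom h2k (ZMod 2) with hφ
  have main : ∀ c : ZMod k, IsSumMagic G k c → ∃ m : ZMod k, c = 2 * m := by
    rintro c ⟨ℓ, hℓ0, hℓc⟩
    -- the total sum over all vertices, mapped to ZMod 2, is zero
    have hdouble : φ (∑ v : V, vertexLabelSum G ℓ v) = 0 := by
      rw [map_sum]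
      have hstep : ∀ v : V, φ (vertexLabelSum G ℓ v)
          = ∑ u : V, (if G.Adj v u then φ (ℓ s(v, u)) else 0) := by
        intro v
        rw [vertexLabelSum, map_sum, Finset.sum_filter]
      rw [Finset.sum_congr rfl (fun v _ => hstep v), ← Finset.sum_product']
      refine Finset.sum_involution (fun p _ => Prod.swap p) ?_ ?_ ?_ ?_
      · intro p _
        have hsym : s(p.1, p.2) = s(p.2, p.1) := Sym2.eq_swap
        by_cases h : G.Adj p.1 p.2
        · simp only [Prod.swap, h, h.symm, if_true]
          rw [← hsym]
          exact CharTwo.add_self_eq_zero _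
        · have h' : ¬ G.Adj p.2 p.1 := fun hh => h hh.symm
          simp [Prod.swap, h, h']
      · intro p _ hne
        have hadj : G.Adj p.1 p.2 := by
          by_contra h; exact hne (by simp [h])
        intro hswap
        have : p.1 = p.2 := by
          have := congrArg Prod.fst hswap
          simpa [Prod.swap] using this.symm
        exact G.irrefl (this ▸ hadj)
      · intro p _; exact Finset.mem_univ _
      · intro p _; rfl
    have hsum : ∑ v : V, vertexLabelSum G ℓ v = (Fintype.card V : ZMod k) * c := by
      rw [Finset.sum_congr rfl (fun v _ => hℓc v)]
      simp [Finset.card_univ, mul_comm]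
    rw [hsum, map_mul, map_natCast] at hdouble
    obtain ⟨t, ht⟩ := hodd
    have hcard : ((Fintype.card V : ℕ) : ZMod 2) = 1 := by
      rw [ht]; push_cast; ring_nf
      simp [CharTwo.two_eq_zero]
    rw [hcard, one_mul] at hdouble
    -- hdouble : φ c = 0, so 2 ∣ c.val
    have hval : ((c.val : ℕ) : ZMod 2) = 0 := by
      have : φ ((c.val : ℕ) : ZMod k) = 0 := by
        rwa [ZMod.natCast_val, ZMod.cast_id]
      rwa [map_natCast] at this
    have hdvd : (2 : ℕ) ∣ c.val := (ZMod.natCast_eq_zero_iff _ _).mp hval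
    obtain ⟨t, ht2⟩ := hdvd
    refine ⟨(t : ZMod k), ?_⟩
    have : c = ((c.val : ℕ) : ZMod k) := by rw [ZMod.natCast_val, ZMod.cast_id]
    rw [this, ht2]; push_cast; ring
  refine ⟨main, fun hcm => ?_⟩
  obtain ⟨m, hm⟩ := main 1 (hcm 1)
  have : φ (1 : ZMod k) = φ (2 * m) := congrArg φ hm
  rw [map_one, map_mul, map_ofNat] at this
  simp [CharTwo.two_eq_zero] at this
end

section
/- Let k ≥ 3 and r ≥ 3 be integers with gcd(r, k) = 1, and let G be an r-regular finite simple graph. Then every nonzero element of ℤ_k belongs to the sum spectrum of G, i.e., ℤ_k \ {0} ⊆ Σ_k(G). -/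
/-- If `gcd(r, k) = 1` with `k, r ≥ 3`, then every nonzero residue is a magic sum of any
`r`-regular graph. -/
theorem nonzero_spectrum_of_coprime {V : Type*} [Fintype V] (G : SimpleGraph V)
    (r k : ℕ) (hr : 3 ≤ r) (hk : 3 ≤ k) (hcop : Nat.gcd r k = 1)
    (hreg : IsRegularDeg G r) :
    {c : ZMod k | c ≠ 0} ⊆ sumSpectrum G k := by
  intro c hc
  have hc : c ≠ 0 := hc
  haveI : NeZero k := ⟨by omega⟩
  have u : (ZMod k)ˣ := ZMod.unitOfCoprime r hcop
  set a : ZMod k := (↑(ZMod.unitOfCoprime r hcop)⁻¹ : ZMod k) * c with ha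
  have hru : ((ZMod.unitOfCoprime r hcop : (ZMod k)ˣ) : ZMod k) = (r : ZMod k) :=
    ZMod.coe_unitOfCoprime r hcop
  have hra : (r : ZMod k) * a = c := by
    rw [ha, ← hru, ← mul_assoc, ← Units.val_mul, mul_inv_cancel, Units.val_one, one_mul]
  have hane : a ≠ 0 := by
    intro h
    apply hc
    rw [← hra, h, mul_zero]
  refine ⟨fun _ => a, fun e _ => hane, fun v => ?_⟩
  unfold vertexLabelSum
  rw [Finset.sum_const, ← degreeOf, hreg v, nsmul_eq_mul, hra]
end

section
/- Let k ≥ 3 and r ≥ 3 be integers, and let G be an r-regular finite simple graph that is zero-sum k-magic. If G has a perfect matching (a 1-factor), then G is completely k-magic. -/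
/-- A zero-sum `k`-magic `r`-regular graph (`k, r ≥ 3`) with a perfect matching is
completely `k`-magic. -/
theorem completely_magic_of_perfect_matching {V : Type*} [Fintype V] (G : SimpleGraph V)
    (r k : ℕ) (hr : 3 ≤ r) (hk : 3 ≤ k) (hreg : IsRegularDeg G r)
    (hzero : IsSumMagic G k 0)
    (hpm : ∃ M : SimpleGraph V, M ≤ G ∧ IsRegularDeg M 1) :
    CompletelyMagic G k := by
  classical
  intro c
  by_cases hc : c = 0
  · subst hc; exact hzero
  obtain ⟨M, hMG, hM1⟩ := hpm
  haveI : NeZero k := ⟨by omega⟩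
  haveI : Fact (1 < k) := ⟨by omega⟩
  set m : ZMod k := ((r - 1 : ℕ) : ZMod k) with hm
  set b : ZMod k := if m = c then 2 else 1 with hb
  set a : ZMod k := c - m * b with ha
  have hb0 : b ≠ 0 := by
    rw [hb]; split
    · intro h
      have h2 : ((2 : ℕ) : ZMod k) = 0 := by exact_mod_cast h
      have hdvd := (ZMod.natCast_eq_zero_iff 2 k).mp h2
      have := Nat.le_of_dvd (by norm_num) hdvd
      omega
    · exact one_ne_zero
  have ha0 : a ≠ 0 := by
    rw [ha, hb]
    split
    · rename_i h
      rw [h]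
      have : c - c * 2 = -c := by ring
      rw [this]
      simpa using hc
    · rename_i h
      intro h2
      apply h
      have : c - m * 1 = c - m := by ring
      rw [this] at h2
      exact (sub_eq_zero.mp h2).symm
  refine ⟨fun e => if e ∈ M.edgeSet then a else b, ?_, ?_⟩
  · intro e _
    dsimp only
    split
    · exact ha0
    · exact hb0
  · intro v
    unfold vertexLabelSum
    have key : ∀ u ∈ Finset.univ.filter (fun u => G.Adj v u),
        (if s(v, u) ∈ M.edgeSet then a else b) = (if M.Adj v u then a else b) := by
      intro u _
      simp [SimpleGraph.mem_edgeSet]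
    rw [Finset.sum_congr rfl key, Finset.sum_ite]
    have hfil : (Finset.univ.filter (fun u => G.Adj v u)).filter (fun u => M.Adj v u)
        = Finset.univ.filter (fun u => M.Adj v u) := by
      ext u
      simp only [Finset.mem_filter, Finset.mem_univ, true_and]
      exact ⟨fun h => h.2, fun h => ⟨hMG h, h⟩⟩
    have hcard1 : ((Finset.univ.filter (fun u => G.Adj v u)).filter
        (fun u => M.Adj v u)).card = 1 := by
      rw [hfil]
      have := hM1 v
      unfold degreeOf at this
      convert this using 2
    have hcardS : (Finset.univ.filter (fun u => G.Adj v u)).card = r := by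
      have := hreg v
      unfold degreeOf at this
      convert this using 2
    have hcard2 : ((Finset.univ.filter (fun u => G.Adj v u)).filter
        (fun u => ¬ M.Adj v u)).card = r - 1 := by
      have hsplit := Finset.card_filter_add_card_filter_not
        (s := Finset.univ.filter (fun u => G.Adj v u)) (p := fun u => M.Adj v u)
      omega
    rw [Finset.sum_const, Finset.sum_const, hcard1, hcard2, one_smul, nsmul_eq_mul]
    rw [ha, ← hm]
    ring
end
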